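/- arXiv:1402.2955 — 4 statements merged into one kernel-verified Lean document; each statement's English description precedes it below -/
import Mathlib

section
/- For any coideal subalgebra datum (W¹,W²,W³,F), the algebra C(W¹,W²,W³,F) — the subalgebra of H generated by kF, the elements of W¹⊕W², and {[w], [w]~ : w ∈ W³} — is a homogeneous left coideal subalgebra of H; and likewise C_{(χ₁,χ₂)}(W¹,W²,W³,F) is a homogeneous left coideal subalgebra of H_{(χ₁,χ₂)}. -/
open scoped TensorProduct

noncomputable section

/-- A left `H`-comodule algebra structure on the `k`-algebra `A`: the coaction is an algebra
map `A → H ⊗ A` which is coassociative and counital. -/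
structure LeftComodAlg (k : Type*) [Field k] (H : Type*) [Ring H] [HopfAlgebra k H]
    (A : Type*) [Ring A] [Algebra k A] where
  ρ : A →ₐ[k] H ⊗[k] A
  coassoc : ∀ a : A,
    TensorProduct.map (Coalgebra.comul (R := k)) LinearMap.id (ρ a) =
      (TensorProduct.assoc k H H A).symm (TensorProduct.map LinearMap.id ρ.toLinearMap (ρ a))
  counital : ∀ a : A,
    TensorProduct.map (Coalgebra.counit (R := k)) LinearMap.id (ρ a) = (1 : k) ⊗ₜ[k] a

namespace LeftComodAlg

variable {k : Type*} [Field k] {H : Type*} [Ring H] [HopfAlgebra k H]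
  {A : Type*} [Ring A] [Algebra k A]

/-- The coinvariants of a comodule algebra are trivial. -/
def TrivialCoinv (c : LeftComodAlg k H A) : Prop :=
  ∀ a : A, c.ρ a = (1 : H) ⊗ₜ[k] a → ∃ t : k, a = t • (1 : A)

/-- A submodule is costable if the coaction maps it into `H ⊗ I`. -/
def Costable (c : LeftComodAlg k H A) (I : Submodule k A) : Prop :=
  ∀ a ∈ I, c.ρ a ∈ LinearMap.range (LinearMap.lTensor H I.subtype)

/-- `A` is right `H`-simple: it has no nontrivial costable right ideal. -/
def RightHSimple (c : LeftComodAlg k H A) : Prop :=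
  ∀ I : Submodule k A, (∀ a ∈ I, ∀ b : A, a * b ∈ I) → c.Costable I → I = ⊥ ∨ I = ⊤

end LeftComodAlg

/-- A group-like element of a Hopf algebra. -/
def IsGrouplike (k : Type*) [Field k] {H : Type*} [Ring H] [HopfAlgebra k H] (g : H) : Prop :=
  g ≠ 0 ∧ Coalgebra.comul (R := k) g = g ⊗ₜ[k] g ∧ Coalgebra.counit (R := k) g = (1 : k)
/-- The group `G = ℤ/n × ℤ/n` (written additively; `(1,0)` corresponds to `(g,1)` and
`(0,1)` to `(1,g)`). -/
abbrev GGrp (n : ℕ) := ZMod n × ZMod n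

/-- A normalized 2-cocycle on an additively written abelian group `G` with values in `k^×`. -/
structure Cocycle2 (G : Type*) [AddCommGroup G] (k : Type*) [Field k] where
  c : G → G → kˣ
  cocycle : ∀ f f' f'' : G, c f f' * c (f + f') f'' = c f' f'' * c f (f' + f'')
  norm_left : ∀ f : G, c 0 f = 1
  norm_right : ∀ f : G, c f 0 = 1

/-- Two 2-cocycles are cohomologous on the subgroup `F` (their restrictions to `F` differ by
a coboundary), i.e. they give the same class in `H²(F, k^×)`. -/
def CohomologousOn {n : ℕ} {k : Type*} [Field k] (F : AddSubgroup (GGrp n))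
    (ψ ψ' : Cocycle2 (GGrp n) k) : Prop :=
  ∃ c : GGrp n → kˣ, c 0 = 1 ∧
    ∀ f ∈ F, ∀ f' ∈ F, ψ'.c f f' = c f * c f' * (c (f + f'))⁻¹ * ψ.c f f'

/-- A 2-cocycle `ψ` is compatible with the subgroup `F` if
`qⁱ ψ((g,1),f)/ψ(f,(g,1)) = qʲ ψ((1,g⁻¹),f)/ψ(f,(1,g⁻¹))` for every `f = (gⁱ,gʲ) ∈ F`. -/
def CocycleCompatible {n : ℕ} {k : Type*} [Field k] (q : k) (ψ : Cocycle2 (GGrp n) k)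
    (F : AddSubgroup (GGrp n)) : Prop :=
  ∀ f ∈ F,
    q ^ f.1.val * ((ψ.c ((1 : ZMod n), (0 : ZMod n)) f : k) * ((ψ.c f (1, 0) : k))⁻¹) =
      q ^ f.2.val * ((ψ.c ((0 : ZMod n), (-1 : ZMod n)) f : k) * ((ψ.c f (0, -1) : k))⁻¹)

/-- A presentation of the Hopf algebra `H_{(χ₁,χ₂)}` (for trivial characters this is
`H = T_q ⊗ T_{q⁻¹}`): it is generated by the group `G = ℤ/n × ℤ/n` (via `fG`) together with
`x, y`, subject to `xⁿ = 0 = yⁿ`, `xy = χ₂(g,1)·yx`, `f·x = χ₁(f)qⁱ·x·f`,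
`f·y = χ₂(f)qʲ·y·f` for `f = (gⁱ,gʲ)`, with `Δ(x) = x ⊗ 1 + (g,1) ⊗ x`,
`Δ(y) = y ⊗ 1 + (1,g⁻¹) ⊗ y`, `Δ(f) = f ⊗ f`, and with basis `{xⁱyʲf}`. -/
structure HPres (k : Type*) [Field k] (n : ℕ) (q : k) (χ₁ χ₂ : GGrp n → kˣ)
    (H : Type*) [Ring H] [HopfAlgebra k H] where
  x : H
  y : H
  fG : GGrp n → H
  chi_compat : ((χ₁ ((0 : ZMod n), (-1 : ZMod n)) : kˣ) : k) * ((χ₂ ((1 : ZMod n), (0 : ZMod n)) : kˣ) : k) = 1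
  fG_zero : fG 0 = 1
  fG_mul : ∀ f f' : GGrp n, fG f * fG f' = fG (f + f')
  x_pow : x ^ n = 0
  y_pow : y ^ n = 0
  xy : x * y = ((χ₂ ((1 : ZMod n), (0 : ZMod n)) : kˣ) : k) • (y * x)
  fx : ∀ f : GGrp n, fG f * x = (((χ₁ f : kˣ) : k) * q ^ f.1.val) • (x * fG f)
  fy : ∀ f : GGrp n, fG f * y = (((χ₂ f : kˣ) : k) * q ^ f.2.val) • (y * fG f)
  comul_f : ∀ f : GGrp n, Coalgebra.comul (R := k) (fG f) = fG f ⊗ₜ[k] fG f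
  comul_x : Coalgebra.comul (R := k) x = x ⊗ₜ[k] 1 + fG (1, 0) ⊗ₜ[k] x
  comul_y : Coalgebra.comul (R := k) y = y ⊗ₜ[k] 1 + fG (0, -1) ⊗ₜ[k] y
  counit_f : ∀ f : GGrp n, Coalgebra.counit (R := k) (fG f) = (1 : k)
  counit_x : Coalgebra.counit (R := k) x = (0 : k)
  counit_y : Coalgebra.counit (R := k) y = (0 : k)
  bas : Module.Basis (Fin n × Fin n × GGrp n) k H
  bas_eq : ∀ p : Fin n × Fin n × GGrp n,
    bas p = x ^ (p.1 : ℕ) * y ^ (p.2.1 : ℕ) * fG p.2.2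

namespace HPres

variable {k : Type*} [Field k] {n : ℕ} {q : k} {χ₁ χ₂ : GGrp n → kˣ}
  {H : Type*} [Ring H] [HopfAlgebra k H]

/-- Projection of `H` onto the line `k·x`, relative to the standard basis. -/
def px [NeZero n] (P : HPres k n q χ₁ χ₂ H) : H →ₗ[k] H :=
  (P.bas.coord ((1 : Fin n), (0 : Fin n), (0 : GGrp n))).smulRight
    (P.bas ((1 : Fin n), (0 : Fin n), (0 : GGrp n)))

/-- Projection of `H` onto the line `k·y`, relative to the standard basis. -/
def py [NeZero n] (P : HPres k n q χ₁ χ₂ H) : H →ₗ[k] H :=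
  (P.bas.coord ((0 : Fin n), (1 : Fin n), (0 : GGrp n))).smulRight
    (P.bas ((0 : Fin n), (1 : Fin n), (0 : GGrp n)))

/-- The line `V₁ = k·x`. -/
def V1 (P : HPres k n q χ₁ χ₂ H) : Submodule k H := Submodule.span k {P.x}

/-- The line `V₂ = k·y`. -/
def V2 (P : HPres k n q χ₁ χ₂ H) : Submodule k H := Submodule.span k {P.y}

/-- The plane `V₁ ⊕ V₂ = k·x ⊕ k·y`. -/
def V12 (P : HPres k n q χ₁ χ₂ H) : Submodule k H := Submodule.span k {P.x, P.y}

/-- The action of `f = (gⁱ,gʲ) ∈ G` on `V₁ ⊕ V₂`: `x ↦ χ₁(f)qⁱ x`, `y ↦ χ₂(f)qʲ y`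
(extended by the basis projections). -/
def actG [NeZero n] (P : HPres k n q χ₁ χ₂ H) (f : GGrp n) : H →ₗ[k] H :=
  (((χ₁ f : kˣ) : k) * q ^ f.1.val) • P.px + (((χ₂ f : kˣ) : k) * q ^ f.2.val) • P.py

/-- For `w = (v₁,v₂) ∈ V₁ ⊕ V₂`, the element `[w] = v₁ + v₂·(g,g)`. -/
def br [NeZero n] (P : HPres k n q χ₁ χ₂ H) (w : H) : H :=
  P.px w + P.py w * P.fG (1, 1)

/-- For `w = (v₁,v₂) ∈ V₁ ⊕ V₂`, the element `[w]~ = v₂ + v₁·(g⁻¹,g⁻¹)`. -/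
def tbr [NeZero n] (P : HPres k n q χ₁ χ₂ H) (w : H) : H :=
  P.py w + P.px w * P.fG (-1, -1)

/-- The degree-`m` projection of `H` relative to the coradical grading, for which
`xⁱyʲf` is homogeneous of degree `i + j`. -/
def grProj (P : HPres k n q χ₁ χ₂ H) (m : ℕ) : H →ₗ[k] H :=
  P.bas.constr k (fun p : Fin n × Fin n × GGrp n =>
    if (p.1 : ℕ) + (p.2.1 : ℕ) = m then P.bas p else 0)

/-- Conjugation by the group-like element `fG f`: `h ↦ fG f * h * fG (-f)`. -/
def conj (P : HPres k n q χ₁ χ₂ H) (f : GGrp n) : H →ₗ[k] H :=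
  LinearMap.mulLeft k (P.fG f) ∘ₗ LinearMap.mulRight k (P.fG (-f))

end HPres

/-- A subalgebra `C ⊆ H` is a left coideal subalgebra if `Δ(C) ⊆ H ⊗ C`. -/
def IsLeftCoidealSubalgebra {k : Type*} [Field k] {H : Type*} [Ring H] [HopfAlgebra k H]
    (C : Subalgebra k H) : Prop :=
  ∀ c ∈ C, Coalgebra.comul (R := k) c ∈
    LinearMap.range (LinearMap.lTensor H (Subalgebra.toSubmodule C).subtype)

/-- A subalgebra of `H` is homogeneous (for the coradical grading) if it is stable under all
the homogeneous projections. -/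
def IsHomogeneousSubalgebra {k : Type*} [Field k] {n : ℕ} {q : k} {χ₁ χ₂ : GGrp n → kˣ}
    {H : Type*} [Ring H] [HopfAlgebra k H] (P : HPres k n q χ₁ χ₂ H)
    (C : Subalgebra k H) : Prop :=
  ∀ c ∈ C, ∀ m : ℕ, P.grProj m c ∈ C

/-- A coideal subalgebra datum `(W¹, W², W³, F)` for a presented Hopf algebra
`H_{(χ₁,χ₂)}`. -/
structure CoidealDatum {k : Type*} [Field k] {n : ℕ} [NeZero n] {q : k}
    {χ₁ χ₂ : GGrp n → kˣ} {H : Type*} [Ring H] [HopfAlgebra k H]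
    (P : HPres k n q χ₁ χ₂ H) where
  W1 : Submodule k H
  W2 : Submodule k H
  W3 : Submodule k H
  F : AddSubgroup (GGrp n)
  hW1 : W1 ≤ P.V1
  hW2 : W2 ≤ P.V2
  hW3 : W3 ≤ P.V12
  hcap1 : (W1 ⊔ W2 ⊔ W3) ⊓ P.V1 = W1
  hcap2 : (W1 ⊔ W2 ⊔ W3) ⊓ P.V2 = W2
  hW3V1 : W3 ⊓ P.V1 = ⊥
  hW3V2 : W3 ⊓ P.V2 = ⊥
  indep1 : W1 ⊓ (W2 ⊔ W3) = ⊥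
  indep2 : W2 ⊓ (W1 ⊔ W3) = ⊥
  indep3 : W3 ⊓ (W1 ⊔ W2) = ⊥
  hF1 : ∀ f ∈ F, ∀ v ∈ W1, P.actG f v ∈ W1
  hF2 : ∀ f ∈ F, ∀ v ∈ W2, P.actG f v ∈ W2
  hF3 : ∀ f ∈ F, ∀ v ∈ W3, P.actG f v ∈ W3
  hgg : W3 ≠ ⊥ → ((1 : ZMod n), (1 : ZMod n)) ∈ F

/-- The coideal subalgebra `C(W¹,W²,W³,F)` attached to a coideal subalgebra datum: the
subalgebra generated by `kF`, the elements of `W¹ ⊕ W²`, and `{[w], [w]~ : w ∈ W³}`. -/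
def CoidealDatum.C {k : Type*} [Field k] {n : ℕ} [NeZero n] {q : k}
    {χ₁ χ₂ : GGrp n → kˣ} {H : Type*} [Ring H] [HopfAlgebra k H]
    {P : HPres k n q χ₁ χ₂ H} (d : CoidealDatum P) : Subalgebra k H :=
  Algebra.adjoin k
    ((P.fG '' (d.F : Set (GGrp n))) ∪ (d.W1 : Set H) ∪ (d.W2 : Set H) ∪
      (P.br '' (d.W3 : Set H)) ∪ (P.tbr '' (d.W3 : Set H)))
section AuxProof

set_option linter.unusedSectionVars false

variable {k : Type*} [Field k] {n : ℕ} [NeZero n] {q : k} {χ₁ χ₂ : GGrp n → kˣ}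
  {H : Type*} [Ring H] [HopfAlgebra k H]

private lemma aux_swap1 {a b : H} {c : k} (h : a * b = c • (b * a)) (i : ℕ) :
    ∃ s : k, ∀ z : H, a * (b ^ i * z) = s • (b ^ i * (a * z)) := by
  induction i with
  | zero => exact ⟨1, fun z => by simp⟩
  | succ i ih =>
    obtain ⟨s, hs⟩ := ih
    refine ⟨s * c, fun z => ?_⟩
    have h' : a * (b * z) = c • (b * (a * z)) := by
      rw [← mul_assoc, h, smul_mul_assoc, mul_assoc]
    calc a * (b ^ (i + 1) * z) = a * (b ^ i * (b * z)) := by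
          rw [pow_succ, mul_assoc]
      _ = s • (b ^ i * (a * (b * z))) := hs (b * z)
      _ = s • (b ^ i * (c • (b * (a * z)))) := by rw [h']
      _ = (s * c) • (b ^ (i + 1) * (a * z)) := by
          rw [mul_smul_comm, smul_smul, pow_succ, mul_assoc]

private lemma aux_swap2 {a b : H} {c : k} (h : a * b = c • (b * a)) (j i : ℕ) :
    ∃ s : k, ∀ z : H, a ^ j * (b ^ i * z) = s • (b ^ i * (a ^ j * z)) := by
  induction j with
  | zero => exact ⟨1, fun z => by simp⟩
  | succ j ih =>
    obtain ⟨s, hs⟩ := ih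
    obtain ⟨s', hs'⟩ := aux_swap1 h i
    refine ⟨s' * s, fun z => ?_⟩
    calc a ^ (j + 1) * (b ^ i * z) = a * (a ^ j * (b ^ i * z)) := by
          rw [pow_succ', mul_assoc]
      _ = a * (s • (b ^ i * (a ^ j * z))) := by rw [hs z]
      _ = s • (a * (b ^ i * (a ^ j * z))) := by rw [mul_smul_comm]
      _ = s • (s' • (b ^ i * (a * (a ^ j * z)))) := by rw [hs' (a ^ j * z)]
      _ = (s' * s) • (b ^ i * (a ^ (j + 1) * z)) := by
          rw [smul_smul, mul_comm s s', pow_succ', mul_assoc]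

private lemma mono_mul (P : HPres k n q χ₁ χ₂ H) (i j i' j' : ℕ) (f f' : GGrp n) :
    ∃ s : k, (P.x ^ i * P.y ^ j * P.fG f) * (P.x ^ i' * P.y ^ j' * P.fG f') =
      s • (P.x ^ (i + i') * P.y ^ (j + j') * P.fG (f + f')) := by
  have hfx : P.fG f * P.x = ((((χ₁ f : kˣ) : k)) * q ^ f.1.val) • (P.x * P.fG f) := P.fx f
  have hfy : P.fG f * P.y = ((((χ₂ f : kˣ) : k)) * q ^ f.2.val) • (P.y * P.fG f) := P.fy f
  have hyx : P.y * P.x =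
      (((χ₂ ((1 : ZMod n), (0 : ZMod n)))⁻¹ : kˣ) : k) • (P.x * P.y) := by
    rw [P.xy, smul_smul, Units.inv_mul, one_smul]
  obtain ⟨s1, h1⟩ := aux_swap1 hfx i'
  obtain ⟨s2, h2⟩ := aux_swap1 hfy j'
  obtain ⟨s3, h3⟩ := aux_swap2 hyx j i'
  refine ⟨s3 * (s1 * s2), ?_⟩
  have h2' : P.fG f * (P.y ^ j' * P.fG f') = s2 • (P.y ^ j' * P.fG (f + f')) := by
    rw [h2 (P.fG f'), P.fG_mul]
  simp only [mul_assoc]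
  rw [h1 (P.y ^ j' * P.fG f'), h2']
  simp only [mul_smul_comm, smul_smul]
  rw [h3 (P.y ^ j' * P.fG (f + f'))]
  simp only [mul_smul_comm, smul_smul, ← mul_assoc, ← pow_add]
  module

private lemma xpow_zero (P : HPres k n q χ₁ χ₂ H) {i : ℕ} (hi : n ≤ i) : P.x ^ i = 0 := by
  have : P.x ^ i = P.x ^ n * P.x ^ (i - n) := by rw [← pow_add]; congr 1; omega
  rw [this, P.x_pow, zero_mul]

private lemma ypow_zero (P : HPres k n q χ₁ χ₂ H) {j : ℕ} (hj : n ≤ j) : P.y ^ j = 0 := by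
  have : P.y ^ j = P.y ^ n * P.y ^ (j - n) := by rw [← pow_add]; congr 1; omega
  rw [this, P.y_pow, zero_mul]

private lemma fin_one_val (hn : 2 ≤ n) : ((1 : Fin n) : ℕ) = 1 := by
  rw [Fin.val_one', Nat.mod_eq_of_lt hn]

private lemma bas_x (P : HPres k n q χ₁ χ₂ H) (hn : 2 ≤ n) :
    P.bas ((1 : Fin n), (0 : Fin n), (0 : GGrp n)) = P.x := by
  rw [P.bas_eq]
  simp [P.fG_zero, fin_one_val hn, Nat.mod_eq_of_lt hn]

private lemma bas_y (P : HPres k n q χ₁ χ₂ H) (hn : 2 ≤ n) :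
    P.bas ((0 : Fin n), (1 : Fin n), (0 : GGrp n)) = P.y := by
  rw [P.bas_eq]
  simp [P.fG_zero, fin_one_val hn, Nat.mod_eq_of_lt hn]

private lemma idx_ne (hn : 2 ≤ n) :
    ((0 : Fin n), (1 : Fin n), (0 : GGrp n)) ≠ ((1 : Fin n), (0 : Fin n), (0 : GGrp n)) := by
  intro hcon
  have := congrArg (fun p : Fin n × Fin n × GGrp n => (p.1 : ℕ)) hcon
  simp only [fin_one_val hn, Fin.val_zero] at this
  exact absurd this (by omega)

private lemma px_x (P : HPres k n q χ₁ χ₂ H) (hn : 2 ≤ n) : P.px P.x = P.x := by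
  have h1 : P.bas.coord ((1 : Fin n), (0 : Fin n), (0 : GGrp n)) P.x = 1 := by
    rw [← bas_x P hn, Module.Basis.coord_apply, Module.Basis.repr_self, Finsupp.single_eq_same]
  rw [HPres.px, LinearMap.smulRight_apply, h1, one_smul, bas_x P hn]

private lemma px_y (P : HPres k n q χ₁ χ₂ H) (hn : 2 ≤ n) : P.px P.y = 0 := by
  have h1 : P.bas.coord ((1 : Fin n), (0 : Fin n), (0 : GGrp n)) P.y = 0 := by
    rw [← bas_y P hn, Module.Basis.coord_apply, Module.Basis.repr_self,
      Finsupp.single_eq_of_ne (Ne.symm (idx_ne hn))]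
  rw [HPres.px, LinearMap.smulRight_apply, h1, zero_smul]

private lemma py_y (P : HPres k n q χ₁ χ₂ H) (hn : 2 ≤ n) : P.py P.y = P.y := by
  have h1 : P.bas.coord ((0 : Fin n), (1 : Fin n), (0 : GGrp n)) P.y = 1 := by
    rw [← bas_y P hn, Module.Basis.coord_apply, Module.Basis.repr_self, Finsupp.single_eq_same]
  rw [HPres.py, LinearMap.smulRight_apply, h1, one_smul, bas_y P hn]

private lemma py_x (P : HPres k n q χ₁ χ₂ H) (hn : 2 ≤ n) : P.py P.x = 0 := by
  have h1 : P.bas.coord ((0 : Fin n), (1 : Fin n), (0 : GGrp n)) P.x = 0 := by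
    rw [← bas_x P hn, Module.Basis.coord_apply, Module.Basis.repr_self,
      Finsupp.single_eq_of_ne (idx_ne hn)]
  rw [HPres.py, LinearMap.smulRight_apply, h1, zero_smul]

private lemma px_comb (P : HPres k n q χ₁ χ₂ H) (hn : 2 ≤ n) (a b : k) :
    P.px (a • P.x + b • P.y) = a • P.x := by
  simp [map_add, map_smul, px_x P hn, px_y P hn]

private lemma py_comb (P : HPres k n q χ₁ χ₂ H) (hn : 2 ≤ n) (a b : k) :
    P.py (a • P.x + b • P.y) = b • P.y := by
  simp [map_add, map_smul, py_y P hn, py_x P hn]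

/-- The degree-`d` homogeneous component (as a span of monomials). -/
private def Hdeg (P : HPres k n q χ₁ χ₂ H) (d : ℕ) : Submodule k H :=
  Submodule.span k {h : H | ∃ (i j : ℕ) (f : GGrp n),
    i + j = d ∧ h = P.x ^ i * P.y ^ j * P.fG f}

private lemma mono_mem_Hdeg (P : HPres k n q χ₁ χ₂ H) (i j : ℕ) (f : GGrp n) :
    P.x ^ i * P.y ^ j * P.fG f ∈ Hdeg P (i + j) :=
  Submodule.subset_span ⟨i, j, f, rfl, rfl⟩

private lemma Hdeg_mul (P : HPres k n q χ₁ χ₂ H) {d e : ℕ} {a b : H}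
    (ha : a ∈ Hdeg P d) (hb : b ∈ Hdeg P e) : a * b ∈ Hdeg P (d + e) := by
  have hle : Hdeg P d * Hdeg P e ≤ Hdeg P (d + e) := by
    rw [Hdeg, Hdeg, Submodule.span_mul_span]
    rw [Submodule.span_le]
    rintro z hz
    rw [Set.mem_mul] at hz
    obtain ⟨u, ⟨i, j, f, hij, rfl⟩, v, ⟨i', j', f', hij', rfl⟩, rfl⟩ := hz
    obtain ⟨s, hs⟩ := mono_mul P i j i' j' f f'
    rw [hs]
    exact Submodule.smul_mem _ _ (Submodule.subset_span ⟨i + i', j + j', f + f', by omega, rfl⟩)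
  exact hle (Submodule.mul_mem_mul ha hb)

private lemma grProj_mono (P : HPres k n q χ₁ χ₂ H) (m d i j : ℕ) (f : GGrp n)
    (hd : i + j = d) :
    P.grProj m (P.x ^ i * P.y ^ j * P.fG f) =
      if m = d then P.x ^ i * P.y ^ j * P.fG f else 0 := by
  by_cases hij : i < n ∧ j < n
  · have hb : P.x ^ i * P.y ^ j * P.fG f = P.bas (⟨i, hij.1⟩, ⟨j, hij.2⟩, f) := by
      rw [P.bas_eq]
    rw [hb, HPres.grProj, Module.Basis.constr_basis]
    simp only [hd]
    rcases eq_or_ne m d with h | h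
    · simp [h]
    · simp [h, Ne.symm h]
  · have h0 : P.x ^ i * P.y ^ j * P.fG f = 0 := by
      rcases not_and_or.1 hij with h | h
      · rw [xpow_zero P (by omega), zero_mul, zero_mul]
      · rw [ypow_zero P (by omega), mul_zero, zero_mul]
    rw [h0]
    simp

private lemma grProj_Hdeg (P : HPres k n q χ₁ χ₂ H) {d : ℕ} {v : H} (hv : v ∈ Hdeg P d)
    (m : ℕ) : P.grProj m v = if m = d then v else 0 := by
  induction hv using Submodule.span_induction with
  | mem z hz =>
    obtain ⟨i, j, f, hij, rfl⟩ := hz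
    exact grProj_mono P m d i j f hij
  | zero => simp
  | add u w hu hw ihu ihw =>
    rw [map_add, ihu, ihw]
    rcases eq_or_ne m d with h | h <;> simp [h]
  | smul a u hu ihu =>
    rw [map_smul, ihu]
    rcases eq_or_ne m d with h | h <;> simp [h]

end AuxProof

section AuxProof2

set_option linter.unusedSectionVars false

variable {k : Type*} [Field k] {n : ℕ} [NeZero n] {q : k} {χ₁ χ₂ : GGrp n → kˣ}
  {H : Type*} [Ring H] [HopfAlgebra k H] {P : HPres k n q χ₁ χ₂ H} (d : CoidealDatum P)

private lemma memC_fG {f : GGrp n} (hf : f ∈ d.F) : P.fG f ∈ d.C :=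
  Algebra.subset_adjoin (Set.mem_union_left _ (Set.mem_union_left _ (Set.mem_union_left _
    (Set.mem_union_left _ ⟨f, hf, rfl⟩))))

private lemma memC_W1 {w : H} (hw : w ∈ d.W1) : w ∈ d.C :=
  Algebra.subset_adjoin (Set.mem_union_left _ (Set.mem_union_left _ (Set.mem_union_left _
    (Set.mem_union_right _ hw))))

private lemma memC_W2 {w : H} (hw : w ∈ d.W2) : w ∈ d.C :=
  Algebra.subset_adjoin (Set.mem_union_left _ (Set.mem_union_left _
    (Set.mem_union_right _ hw)))

private lemma memC_br {w : H} (hw : w ∈ d.W3) : P.br w ∈ d.C :=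
  Algebra.subset_adjoin (Set.mem_union_left _ (Set.mem_union_right _ ⟨w, hw, rfl⟩))

private lemma memC_tbr {w : H} (hw : w ∈ d.W3) : P.tbr w ∈ d.C :=
  Algebra.subset_adjoin (Set.mem_union_right _ ⟨w, hw, rfl⟩)

private lemma mem_R_tmul (h : H) {c : H} (hc : c ∈ d.C) :
    h ⊗ₜ[k] c ∈ LinearMap.range (LinearMap.lTensor H (Subalgebra.toSubmodule d.C).subtype) :=
  ⟨h ⊗ₜ[k] (⟨c, hc⟩ : d.C), by simp⟩

private lemma myR_mul_aux (a b : H ⊗[k] ↥(Subalgebra.toSubmodule d.C)) :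
    (LinearMap.lTensor H (Subalgebra.toSubmodule d.C).subtype a) *
      (LinearMap.lTensor H (Subalgebra.toSubmodule d.C).subtype b) ∈
      LinearMap.range (LinearMap.lTensor H (Subalgebra.toSubmodule d.C).subtype) := by
  induction a using TensorProduct.induction_on with
  | zero => rw [map_zero, zero_mul]; exact zero_mem _
  | add a₁ a₂ ih₁ ih₂ => rw [map_add, add_mul]; exact add_mem ih₁ ih₂
  | tmul h c =>
    induction b using TensorProduct.induction_on with
    | zero => rw [map_zero, mul_zero]; exact zero_mem _
    | add b₁ b₂ ih₁ ih₂ => rw [map_add, mul_add]; exact add_mem ih₁ ih₂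
    | tmul h' c' =>
      rw [LinearMap.lTensor_tmul, LinearMap.lTensor_tmul, Submodule.subtype_apply,
        Submodule.subtype_apply, Algebra.TensorProduct.tmul_mul_tmul]
      exact mem_R_tmul d _ (mul_mem (show (c : H) ∈ d.C from c.2)
        (show (c' : H) ∈ d.C from c'.2))

private lemma myR_mul {u v : H ⊗[k] H}
    (hu : u ∈ LinearMap.range (LinearMap.lTensor H (Subalgebra.toSubmodule d.C).subtype))
    (hv : v ∈ LinearMap.range (LinearMap.lTensor H (Subalgebra.toSubmodule d.C).subtype)) :
    u * v ∈ LinearMap.range (LinearMap.lTensor H (Subalgebra.toSubmodule d.C).subtype) := by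
  obtain ⟨a, rfl⟩ := hu
  obtain ⟨b, rfl⟩ := hv
  exact myR_mul_aux d a b

private lemma comul_smul_x (a : k) :
    Coalgebra.comul (R := k) (a • P.x) =
      (a • P.x) ⊗ₜ[k] (1 : H) + P.fG (1, 0) ⊗ₜ[k] (a • P.x) := by
  rw [map_smul, P.comul_x, smul_add, TensorProduct.smul_tmul', ← TensorProduct.tmul_smul]

private lemma comul_smul_y (a : k) :
    Coalgebra.comul (R := k) (a • P.y) =
      (a • P.y) ⊗ₜ[k] (1 : H) + P.fG (0, -1) ⊗ₜ[k] (a • P.y) := by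
  rw [map_smul, P.comul_y, smul_add, TensorProduct.smul_tmul', ← TensorProduct.tmul_smul]

private lemma comul_mul' (u v : H) :
    Coalgebra.comul (R := k) (u * v) =
      Coalgebra.comul (R := k) u * Coalgebra.comul (R := k) v := by
  rw [← Bialgebra.comulAlgHom_apply, ← Bialgebra.comulAlgHom_apply,
    ← Bialgebra.comulAlgHom_apply, map_mul]

private lemma fG_add_eq1 :
    P.fG ((0 : ZMod n), (-1 : ZMod n)) * P.fG (1, 1) = P.fG (1, 0) := by
  have h : ((0 : ZMod n), (-1 : ZMod n)) + ((1 : ZMod n), (1 : ZMod n)) =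
      ((1 : ZMod n), (0 : ZMod n)) := by
    rw [Prod.mk_add_mk, zero_add, neg_add_cancel]
  rw [P.fG_mul, h]

private lemma fG_add_eq2 :
    P.fG ((1 : ZMod n), (0 : ZMod n)) * P.fG (-1, -1) = P.fG (0, -1) := by
  have h : ((1 : ZMod n), (0 : ZMod n)) + ((-1 : ZMod n), (-1 : ZMod n)) =
      ((0 : ZMod n), (-1 : ZMod n)) := by
    rw [Prod.mk_add_mk, add_neg_cancel, zero_add]
  rw [P.fG_mul, h]

private lemma comul_br_comb (a b : k) :
    Coalgebra.comul (R := k) (a • P.x + b • (P.y * P.fG (1, 1))) =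
      (a • P.x) ⊗ₜ[k] (1 : H) + (b • (P.y * P.fG (1, 1))) ⊗ₜ[k] P.fG (1, 1) +
        P.fG (1, 0) ⊗ₜ[k] (a • P.x + b • (P.y * P.fG (1, 1))) := by
  rw [map_add, map_smul, map_smul, P.comul_x, comul_mul' P.y (P.fG (1, 1)), P.comul_y,
    P.comul_f, add_mul, Algebra.TensorProduct.tmul_mul_tmul,
    Algebra.TensorProduct.tmul_mul_tmul, one_mul, fG_add_eq1]
  simp only [smul_add, TensorProduct.tmul_smul, ← TensorProduct.smul_tmul',
    TensorProduct.tmul_add]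
  module

private lemma comul_tbr_comb (a b : k) :
    Coalgebra.comul (R := k) (b • P.y + a • (P.x * P.fG (-1, -1))) =
      (b • P.y) ⊗ₜ[k] (1 : H) + (a • (P.x * P.fG (-1, -1))) ⊗ₜ[k] P.fG (-1, -1) +
        P.fG (0, -1) ⊗ₜ[k] (b • P.y + a • (P.x * P.fG (-1, -1))) := by
  rw [map_add, map_smul, map_smul, P.comul_y, comul_mul' P.x (P.fG (-1, -1)), P.comul_x,
    P.comul_f, add_mul, Algebra.TensorProduct.tmul_mul_tmul,
    Algebra.TensorProduct.tmul_mul_tmul, one_mul, fG_add_eq2]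
  simp only [smul_add, TensorProduct.tmul_smul, ← TensorProduct.smul_tmul',
    TensorProduct.tmul_add]
  module

private lemma br_comb (hn : 2 ≤ n) {w : H} (hw : w ∈ P.V12) {a b : k}
    (hab : a • P.x + b • P.y = w) :
    P.br w = a • P.x + b • (P.y * P.fG (1, 1)) := by
  rw [HPres.br, ← hab, px_comb P hn, py_comb P hn, smul_mul_assoc]

private lemma tbr_comb (hn : 2 ≤ n) {w : H} (hw : w ∈ P.V12) {a b : k}
    (hab : a • P.x + b • P.y = w) :
    P.tbr w = b • P.y + a • (P.x * P.fG (-1, -1)) := by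
  rw [HPres.tbr, ← hab, px_comb P hn, py_comb P hn, smul_mul_assoc]

end AuxProof2

/-- For any coideal subalgebra datum `(W¹,W²,W³,F)`, the algebra
`C(W¹,W²,W³,F)` — the subalgebra of `H_{(χ₁,χ₂)}` generated by `kF`, the elements of
`W¹ ⊕ W²`, and `{[w], [w]~ : w ∈ W³}` — is a homogeneous left coideal subalgebra of
`H_{(χ₁,χ₂)}` (for trivial characters this is the statement for `H` itself). -/
theorem coidealDatum_C_isLeftCoideal
    {k : Type*} [Field k] [IsAlgClosed k] [CharZero k]
    {n : ℕ} [NeZero n] (hn : 2 ≤ n) {q : k} (hq : IsPrimitiveRoot q n)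
    {χ₁ χ₂ : GGrp n → kˣ} {H : Type*} [Ring H] [HopfAlgebra k H]
    (P : HPres k n q χ₁ χ₂ H) (d : CoidealDatum P) :
    IsLeftCoidealSubalgebra d.C ∧ IsHomogeneousSubalgebra P d.C := by
  classical
  constructor
  · -- left coideal subalgebra
    intro c hc
    induction hc using Algebra.adjoin_induction with
    | mem z hz =>
      rcases hz with (((hz | hz) | hz) | hz) | hz
      · obtain ⟨f, hf, rfl⟩ := hz
        rw [P.comul_f]
        exact mem_R_tmul d _ (memC_fG d hf)
      · -- z ∈ W1
        obtain ⟨a, ha⟩ := Submodule.mem_span_singleton.1 (d.hW1 hz)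
        rw [← ha, comul_smul_x]
        exact add_mem (mem_R_tmul d _ (one_mem _))
          (mem_R_tmul d _ (by rw [ha]; exact memC_W1 d hz))
      · -- z ∈ W2
        obtain ⟨a, ha⟩ := Submodule.mem_span_singleton.1 (d.hW2 hz)
        rw [← ha, comul_smul_y]
        exact add_mem (mem_R_tmul d _ (one_mem _))
          (mem_R_tmul d _ (by rw [ha]; exact memC_W2 d hz))
      · -- z = [w] for w ∈ W3
        obtain ⟨w, hw, rfl⟩ := hz
        by_cases hw0 : w = 0
        · subst hw0
          have hbr0 : P.br (0 : H) = 0 := by simp [HPres.br]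
          rw [hbr0, map_zero]
          exact zero_mem _
        · have hne : d.W3 ≠ ⊥ := fun hb => hw0 (by rw [hb] at hw; simpa using hw)
          have hF11 : ((1 : ZMod n), (1 : ZMod n)) ∈ d.F := d.hgg hne
          obtain ⟨a, b, hab⟩ := Submodule.mem_span_pair.1 (d.hW3 hw)
          have hbr := br_comb (P := P) hn (d.hW3 hw) hab
          rw [hbr, comul_br_comb]
          refine add_mem (add_mem (mem_R_tmul d _ (one_mem _))
            (mem_R_tmul d _ (memC_fG d hF11))) (mem_R_tmul d _ ?_)
          rw [← hbr]
          exact memC_br d hw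
      · -- z = [w]~ for w ∈ W3
        obtain ⟨w, hw, rfl⟩ := hz
        by_cases hw0 : w = 0
        · subst hw0
          have htbr0 : P.tbr (0 : H) = 0 := by simp [HPres.tbr]
          rw [htbr0, map_zero]
          exact zero_mem _
        · have hne : d.W3 ≠ ⊥ := fun hb => hw0 (by rw [hb] at hw; simpa using hw)
          have hF11 : ((1 : ZMod n), (1 : ZMod n)) ∈ d.F := d.hgg hne
          have hFm : ((-1 : ZMod n), (-1 : ZMod n)) ∈ d.F := by
            have heq : ((-1 : ZMod n), (-1 : ZMod n)) = -((1 : ZMod n), (1 : ZMod n)) := rfl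
            rw [heq]
            exact neg_mem hF11
          obtain ⟨a, b, hab⟩ := Submodule.mem_span_pair.1 (d.hW3 hw)
          have htbr := tbr_comb (P := P) hn (d.hW3 hw) hab
          rw [htbr, comul_tbr_comb]
          refine add_mem (add_mem (mem_R_tmul d _ (one_mem _))
            (mem_R_tmul d _ (memC_fG d hFm))) (mem_R_tmul d _ ?_)
          rw [← htbr]
          exact memC_tbr d hw
    | algebraMap r =>
      have h1 : (algebraMap k H) r = r • (1 : H) := Algebra.algebraMap_eq_smul_one r
      have h2 : Coalgebra.comul (R := k) ((algebraMap k H) r) =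
          (1 : H) ⊗ₜ[k] (r • (1 : H)) := by
        rw [h1, map_smul, Bialgebra.comul_one, Algebra.TensorProduct.one_def, TensorProduct.tmul_smul]
      rw [h2]
      exact mem_R_tmul d _ (Subalgebra.smul_mem _ (one_mem _) r)
    | add u v hu hv ihu ihv =>
      rw [map_add]
      exact add_mem ihu ihv
    | mul u v hu hv ihu ihv =>
      rw [comul_mul']
      exact myR_mul d ihu ihv
  · -- homogeneous
    intro c hc m
    have hc' : c ∈ Submodule.span k
        ((Submonoid.closure ((P.fG '' (d.F : Set (GGrp n))) ∪ (d.W1 : Set H) ∪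
          (d.W2 : Set H) ∪ (P.br '' (d.W3 : Set H)) ∪ (P.tbr '' (d.W3 : Set H))) :
            Submonoid H) : Set H) := by
      rw [← Algebra.adjoin_eq_span]
      exact hc
    clear hc
    induction hc' using Submodule.span_induction with
    | mem z hz =>
      -- z is in the submonoid closure of the generators
      have hdeg : ∃ e : ℕ, z ∈ Hdeg P e := by
        induction hz using Submonoid.closure_induction with
        | mem s hs =>
          rcases hs with (((hs | hs) | hs) | hs) | hs
          · obtain ⟨f, _, rfl⟩ := hs
            exact ⟨0, by simpa using mono_mem_Hdeg P 0 0 f⟩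
          · obtain ⟨a, ha⟩ := Submodule.mem_span_singleton.1 (d.hW1 hs)
            have hx1 : P.x ∈ Hdeg P 1 := by
              simpa [P.fG_zero] using mono_mem_Hdeg P 1 0 0
            exact ⟨1, by rw [← ha]; exact Submodule.smul_mem _ _ hx1⟩
          · obtain ⟨a, ha⟩ := Submodule.mem_span_singleton.1 (d.hW2 hs)
            have hy1 : P.y ∈ Hdeg P 1 := by
              simpa [P.fG_zero] using mono_mem_Hdeg P 0 1 0
            exact ⟨1, by rw [← ha]; exact Submodule.smul_mem _ _ hy1⟩
          · obtain ⟨w, hw, rfl⟩ := hs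
            obtain ⟨a, b, hab⟩ := Submodule.mem_span_pair.1 (d.hW3 hw)
            have hbr := br_comb (P := P) hn (d.hW3 hw) hab
            have hx1 : P.x ∈ Hdeg P 1 := by
              simpa [P.fG_zero] using mono_mem_Hdeg P 1 0 0
            have hyg : P.y * P.fG (1, 1) ∈ Hdeg P 1 := by
              simpa using mono_mem_Hdeg P 0 1 (1, 1)
            refine ⟨1, ?_⟩
            rw [hbr]
            exact add_mem (Submodule.smul_mem _ _ hx1) (Submodule.smul_mem _ _ hyg)
          · obtain ⟨w, hw, rfl⟩ := hs
            obtain ⟨a, b, hab⟩ := Submodule.mem_span_pair.1 (d.hW3 hw)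
            have htbr := tbr_comb (P := P) hn (d.hW3 hw) hab
            have hy1 : P.y ∈ Hdeg P 1 := by
              simpa [P.fG_zero] using mono_mem_Hdeg P 0 1 0
            have hxg : P.x * P.fG (-1, -1) ∈ Hdeg P 1 := by
              simpa using mono_mem_Hdeg P 1 0 (-1, -1)
            refine ⟨1, ?_⟩
            rw [htbr]
            exact add_mem (Submodule.smul_mem _ _ hy1) (Submodule.smul_mem _ _ hxg)
        | one =>
          refine ⟨0, ?_⟩
          have h1 : (1 : H) = P.x ^ 0 * P.y ^ 0 * P.fG 0 := by simp [P.fG_zero]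
          rw [h1]
          exact mono_mem_Hdeg P 0 0 0
        | mul u v hu hv ihu ihv =>
          obtain ⟨e1, h1⟩ := ihu
          obtain ⟨e2, h2⟩ := ihv
          exact ⟨e1 + e2, Hdeg_mul P h1 h2⟩
      have hzC : z ∈ d.C :=
        Submonoid.closure_induction (motive := fun x _ => x ∈ d.C)
          (fun s hs => Algebra.subset_adjoin hs) (one_mem _)
          (fun u v _ _ hu hv => mul_mem hu hv) hz
      obtain ⟨e, he⟩ := hdeg
      rw [grProj_Hdeg P he m]
      split
      · exact hzC
      · exact zero_mem _
    | zero =>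
      rw [map_zero]
      exact zero_mem _
    | add u v hu hv ihu ihv =>
      rw [map_add]
      exact add_mem ihu ihv
    | smul a u hu ihu =>
      rw [map_smul]
      exact Subalgebra.smul_mem _ ihu a
end
end

section
/- For any subgroup F ⊆ G with (g,g) ∈ F, any 2-cocycle ψ ∈ Z²(F,k^×) compatible with F, and any ξ ∈ k^×, μ ∈ k, the algebra L(ξ,μ,F,ψ) is a right H-simple left H-comodule algebra with trivial coinvariants. -/
open scoped TensorProduct

noncomputable section

section ComodPres

variable (k : Type*) [Field k] (n : ℕ) (q : k)
  (H : Type*) [Ring H] [HopfAlgebra k H]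

/-- A presentation of the twisted group algebra `k_ψF` as a left `H`-comodule algebra (the
comodule algebra with basis `{e_f : f ∈ F}`, multiplication `e_f e_{f'} = ψ(f,f') e_{ff'}` and
coaction `e_f ↦ f ⊗ e_f`), relative to the given coaction `co`. -/
structure KPsiPres (P : HPres k n q 1 1 H) (F : AddSubgroup (GGrp n))
    (ψ : Cocycle2 (GGrp n) k)
    {A : Type*} [Ring A] [Algebra k A] (co : LeftComodAlg k H A) where
  e : F → A
  e_zero : e 0 = 1
  e_mul : ∀ f f' : F, e f * e f' = ((ψ.c ↑f ↑f' : kˣ) : k) • e (f + f')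
  co_e : ∀ f : F, co.ρ (e f) = P.fG ↑f ⊗ₜ[k] e f
  li : LinearIndependent k e
  span : ⊤ ≤ Submodule.span k (Set.range e)

/-- A presentation of the left `H`-comodule algebra `K₀₁(a,F,ψ)` (generated by `z` and the
`e_f`), relative to the given coaction `co`. -/
structure K01Pres (P : HPres k n q 1 1 H) (a : k) (F : AddSubgroup (GGrp n))
    (ψ : Cocycle2 (GGrp n) k)
    {A : Type*} [Ring A] [Algebra k A] (co : LeftComodAlg k H A) where
  z : A
  e : F → A
  e_zero : e 0 = 1
  z_pow : z ^ n = a • (1 : A)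
  e_mul : ∀ f f' : F, e f * e f' = ((ψ.c ↑f ↑f' : kˣ) : k) • e (f + f')
  ez : ∀ f : F, e f * z = q ^ (f : GGrp n).1.val • (z * e f)
  co_e : ∀ f : F, co.ρ (e f) = P.fG ↑f ⊗ₜ[k] e f
  co_z : co.ρ z = P.x ⊗ₜ[k] (1 : A) + P.fG (1, 0) ⊗ₜ[k] z
  li : LinearIndependent k (fun p : F × Fin n => e p.1 * z ^ (p.2 : ℕ))
  span : ⊤ ≤ Submodule.span k (Set.range fun p : F × Fin n => e p.1 * z ^ (p.2 : ℕ))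

/-- A presentation of the left `H`-comodule algebra `K₁₀(b,F,ψ)` (generated by `u` and the
`e_f`), relative to the given coaction `co`. -/
structure K10Pres (P : HPres k n q 1 1 H) (b : k) (F : AddSubgroup (GGrp n))
    (ψ : Cocycle2 (GGrp n) k)
    {A : Type*} [Ring A] [Algebra k A] (co : LeftComodAlg k H A) where
  u : A
  e : F → A
  e_zero : e 0 = 1
  u_pow : u ^ n = b • (1 : A)
  e_mul : ∀ f f' : F, e f * e f' = ((ψ.c ↑f ↑f' : kˣ) : k) • e (f + f')
  eu : ∀ f : F, e f * u = q ^ (f : GGrp n).2.val • (u * e f)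
  co_e : ∀ f : F, co.ρ (e f) = P.fG ↑f ⊗ₜ[k] e f
  co_u : co.ρ u = P.y ⊗ₜ[k] (1 : A) + P.fG (0, -1) ⊗ₜ[k] u
  li : LinearIndependent k (fun p : F × Fin n => e p.1 * u ^ (p.2 : ℕ))
  span : ⊤ ≤ Submodule.span k (Set.range fun p : F × Fin n => e p.1 * u ^ (p.2 : ℕ))

/-- A presentation of the left `H`-comodule algebra `K₁₁(a,b,ξ,F,ψ)` (generated by `z`, `u`
and the `e_f`, with `zu - uz = ξ e_{(g,g⁻¹)}`), relative to the given coaction `co`. -/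
structure K11Pres (P : HPres k n q 1 1 H) (a b ξ : k) (F : AddSubgroup (GGrp n))
    (ψ : Cocycle2 (GGrp n) k)
    {A : Type*} [Ring A] [Algebra k A] (co : LeftComodAlg k H A) where
  z : A
  u : A
  e : F → A
  e_zero : e 0 = 1
  z_pow : z ^ n = a • (1 : A)
  u_pow : u ^ n = b • (1 : A)
  zu_mem : ∀ h : ((1 : ZMod n), (-1 : ZMod n)) ∈ F,
    z * u - u * z = ξ • e ⟨((1 : ZMod n), (-1 : ZMod n)), h⟩
  zu_not_mem : ((1 : ZMod n), (-1 : ZMod n)) ∉ F → z * u - u * z = 0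
  e_mul : ∀ f f' : F, e f * e f' = ((ψ.c ↑f ↑f' : kˣ) : k) • e (f + f')
  ez : ∀ f : F, e f * z = q ^ (f : GGrp n).1.val • (z * e f)
  eu : ∀ f : F, e f * u = q ^ (f : GGrp n).2.val • (u * e f)
  co_e : ∀ f : F, co.ρ (e f) = P.fG ↑f ⊗ₜ[k] e f
  co_z : co.ρ z = P.x ⊗ₜ[k] (1 : A) + P.fG (1, 0) ⊗ₜ[k] z
  co_u : co.ρ u = P.y ⊗ₜ[k] (1 : A) + P.fG (0, -1) ⊗ₜ[k] u
  li : LinearIndependent k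
    (fun p : F × Fin n × Fin n => e p.1 * z ^ (p.2.1 : ℕ) * u ^ (p.2.2 : ℕ))
  span : ⊤ ≤ Submodule.span k
    (Set.range fun p : F × Fin n × Fin n => e p.1 * z ^ (p.2.1 : ℕ) * u ^ (p.2.2 : ℕ))

/-- A presentation of the left `H`-comodule algebra `L(ξ,μ,F,ψ)` (generated by `w` and the
`e_f`, with `λ(w) = ξ·x ⊗ 1 + y(g,g) ⊗ e_{(g,g)} + (g,1) ⊗ w`), relative to the given
coaction `co`; here `(g,g) ∈ F`. -/
structure LPres (P : HPres k n q 1 1 H) (F : AddSubgroup (GGrp n))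
    (hF : ((1 : ZMod n), (1 : ZMod n)) ∈ F) (ψ : Cocycle2 (GGrp n) k) (ξ μ : k)
    {A : Type*} [Ring A] [Algebra k A] (co : LeftComodAlg k H A) where
  w : A
  e : F → A
  e_zero : e 0 = 1
  w_pow : w ^ n = μ • (1 : A)
  e_mul : ∀ f f' : F, e f * e f' = ((ψ.c ↑f ↑f' : kˣ) : k) • e (f + f')
  ew : ∀ f : F, e f * w = q ^ (f : GGrp n).1.val • (w * e f)
  co_e : ∀ f : F, co.ρ (e f) = P.fG ↑f ⊗ₜ[k] e f
  co_w : co.ρ w = ξ • (P.x ⊗ₜ[k] (1 : A)) +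
    (P.y * P.fG (1, 1)) ⊗ₜ[k] e ⟨((1 : ZMod n), (1 : ZMod n)), hF⟩ + P.fG (1, 0) ⊗ₜ[k] w
  li : LinearIndependent k (fun p : F × Fin n => e p.1 * w ^ (p.2 : ℕ))
  span : ⊤ ≤ Submodule.span k (Set.range fun p : F × Fin n => e p.1 * w ^ (p.2 : ℕ))

end ComodPres
section Statement9Aux

variable {k : Type*} [Field k] {n : ℕ} {q : k}
  {H : Type*} [Ring H] [HopfAlgebra k H]

/-- Coordinate functional `H ⊗ A → A` relative to the basis of `H`. -/
def coordT {A : Type*} [Ring A] [Algebra k A] (P : HPres k n q 1 1 H)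
    (p : Fin n × Fin n × GGrp n) : H ⊗[k] A →ₗ[k] A :=
  (TensorProduct.lid k A).toLinearMap ∘ₗ LinearMap.rTensor A (P.bas.coord p)

lemma coordT_tmul {A : Type*} [Ring A] [Algebra k A] (P : HPres k n q 1 1 H)
    (p : Fin n × Fin n × GGrp n) (h : H) (a : A) :
    coordT P p (h ⊗ₜ[k] a) = P.bas.repr h p • a := by
  simp [coordT, Module.Basis.coord_apply]

variable (P : HPres k n q 1 1 H)

lemma repr_bas (p p' : Fin n × Fin n × GGrp n) :
    P.bas.repr (P.bas p) p' = if p = p' then 1 else 0 := by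
  rw [Module.Basis.repr_self, Finsupp.single_apply]

lemma fg_x (ψ : GGrp n) : P.fG ψ * P.x = q ^ ψ.1.val • (P.x * P.fG ψ) := by
  simpa using P.fx ψ

lemma fg_y (ψ : GGrp n) : P.fG ψ * P.y = q ^ ψ.2.val • (P.y * P.fG ψ) := by
  simpa using P.fy ψ

lemma x_comm_y : Commute P.x P.y := by
  have := P.xy; simp only [Pi.one_apply, Units.val_one, one_smul] at this
  exact this

lemma one_eq_bas [NeZero n] : (1 : H) = P.bas (0, 0, 0) := by
  rw [P.bas_eq]; simp [P.fG_zero]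

lemma bas_zero_eq [NeZero n] (f : GGrp n) : P.bas (0, 0, f) = P.fG f := by
  rw [P.bas_eq]; simp

lemma bas_mul_x [NeZero n] (a b : Fin n) (ψ : GGrp n) :
    P.bas (a, b, ψ) * P.x =
      if h : (a : ℕ) + 1 < n then q ^ ψ.1.val • P.bas (⟨(a : ℕ) + 1, h⟩, b, ψ) else 0 := by
  have hyx : P.y ^ (b : ℕ) * P.x = P.x * P.y ^ (b : ℕ) :=
    ((x_comm_y P).symm.pow_left _)
  have key : P.bas (a, b, ψ) * P.x =
      q ^ ψ.1.val • (P.x ^ ((a : ℕ) + 1) * P.y ^ (b : ℕ) * P.fG ψ) := by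
    rw [P.bas_eq]
    calc P.x ^ (a : ℕ) * P.y ^ (b : ℕ) * P.fG ψ * P.x
        = P.x ^ (a : ℕ) * P.y ^ (b : ℕ) * (P.fG ψ * P.x) := by
          simp [mul_assoc]
      _ = q ^ ψ.1.val • (P.x ^ (a : ℕ) * (P.y ^ (b : ℕ) * P.x) * P.fG ψ) := by
          rw [fg_x]; simp [mul_assoc, mul_smul_comm]
      _ = q ^ ψ.1.val • (P.x ^ ((a : ℕ) + 1) * P.y ^ (b : ℕ) * P.fG ψ) := by
          rw [hyx, pow_succ]; simp [mul_assoc]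
  rw [key]
  split_ifs with h
  · rw [P.bas_eq]
  · have hn : (a : ℕ) + 1 = n := le_antisymm a.isLt (not_lt.mp h)
    rw [hn, P.x_pow]; simp

lemma bas_mul_yg [NeZero n] (a b : Fin n) (ψ : GGrp n) :
    P.bas (a, b, ψ) * (P.y * P.fG (1, 1)) =
      if h : (b : ℕ) + 1 < n then
        q ^ ψ.2.val • P.bas (a, ⟨(b : ℕ) + 1, h⟩, ψ + (1, 1)) else 0 := by
  have key : P.bas (a, b, ψ) * (P.y * P.fG (1, 1)) =
      q ^ ψ.2.val • (P.x ^ (a : ℕ) * P.y ^ ((b : ℕ) + 1) * P.fG (ψ + (1, 1))) := by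
    rw [P.bas_eq]
    calc P.x ^ (a : ℕ) * P.y ^ (b : ℕ) * P.fG ψ * (P.y * P.fG (1, 1))
        = P.x ^ (a : ℕ) * P.y ^ (b : ℕ) * ((P.fG ψ * P.y) * P.fG (1, 1)) := by
          simp [mul_assoc]
      _ = q ^ ψ.2.val • (P.x ^ (a : ℕ) * (P.y ^ (b : ℕ) * P.y) * (P.fG ψ * P.fG (1, 1))) := by
          rw [fg_y]; simp [mul_assoc, mul_smul_comm, smul_mul_assoc]
      _ = q ^ ψ.2.val • (P.x ^ (a : ℕ) * P.y ^ ((b : ℕ) + 1) * P.fG (ψ + (1, 1))) := by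
          rw [← pow_succ, P.fG_mul]
  rw [key]
  split_ifs with h
  · rw [P.bas_eq]
  · have hn : (b : ℕ) + 1 = n := le_antisymm b.isLt (not_lt.mp h)
    rw [hn, P.y_pow]; simp

lemma bas_mul_g (a b : Fin n) (ψ : GGrp n) :
    P.bas (a, b, ψ) * P.fG (1, 0) = P.bas (a, b, ψ + (1, 0)) := by
  rw [P.bas_eq, P.bas_eq, mul_assoc, P.fG_mul]

end Statement9Aux
section Statement9Com

variable {k : Type*} [Field k] {n : ℕ} {q : k}
  {H : Type*} [Ring H] [HopfAlgebra k H] (P : HPres k n q 1 1 H)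
  {A : Type*} [Ring A] [Algebra k A] {co : LeftComodAlg k H A}
  {F : AddSubgroup (GGrp n)} {hF : ((1 : ZMod n), (1 : ZMod n)) ∈ F}
  {ψc : Cocycle2 (GGrp n) k} {ξ μ : k}
  (LP : LPres k n q H P F hF ψc ξ μ co)

lemma M0 [NeZero n] (φ : GGrp n) (T : H ⊗[k] A) :
    coordT P (0, 0, φ) (T * co.ρ LP.w) = coordT P (0, 0, φ - (1, 0)) T * LP.w := by
  induction T using TensorProduct.induction_on with
  | zero => simp
  | add u v hu hv => rw [add_mul, map_add, map_add, hu, hv, add_mul]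
  | tmul h a =>
    have hh : h ∈ Submodule.span k (Set.range P.bas) := by
      rw [Module.Basis.span_eq]; exact Submodule.mem_top
    induction hh using Submodule.span_induction with
    | zero => simp
    | add u v _ _ hu hv => rw [TensorProduct.add_tmul, add_mul, map_add, map_add, hu, hv, add_mul]
    | smul c h' _ hh' =>
        rw [← TensorProduct.smul_tmul', smul_mul_assoc, map_smul, map_smul, hh', smul_mul_assoc]
    | mem h' hmem =>
      obtain ⟨p, rfl⟩ := hmem
      obtain ⟨a', b', ψ'⟩ := p
      rw [LP.co_w, mul_add, mul_add, mul_smul_comm,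
        Algebra.TensorProduct.tmul_mul_tmul, Algebra.TensorProduct.tmul_mul_tmul,
        Algebra.TensorProduct.tmul_mul_tmul,
        bas_mul_x, bas_mul_yg, bas_mul_g]
      split_ifs with h1 h2 h2 <;>
        simp [coordT_tmul, repr_bas, TensorProduct.smul_tmul', Finsupp.single_apply,
          Prod.mk.injEq, eq_sub_iff_add_eq, ite_smul, ite_mul, and_assoc]


lemma M1 [NeZero n] (hn1 : 1 < n) (φ : GGrp n) (T : H ⊗[k] A) :
    coordT P (⟨1, hn1⟩, 0, φ) (T * co.ρ LP.w) =
      (ξ * q ^ φ.1.val) • coordT P (0, 0, φ) T +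
        coordT P (⟨1, hn1⟩, 0, φ - (1, 0)) T * LP.w := by
  induction T using TensorProduct.induction_on with
  | zero => simp
  | add u v hu hv =>
    rw [add_mul, map_add, map_add, map_add, hu, hv, smul_add, add_mul]; abel
  | tmul h a =>
    have hh : h ∈ Submodule.span k (Set.range P.bas) := by
      rw [Module.Basis.span_eq]; exact Submodule.mem_top
    induction hh using Submodule.span_induction with
    | zero => simp
    | add u v _ _ hu hv =>
      rw [TensorProduct.add_tmul, add_mul, map_add, map_add, map_add, hu, hv,
        smul_add, add_mul]
      abel
    | smul c h' _ hh' =>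
      rw [← TensorProduct.smul_tmul', smul_mul_assoc, map_smul, map_smul, map_smul, hh',
        smul_add, smul_mul_assoc, smul_comm c]
    | mem h' hmem =>
      obtain ⟨p, rfl⟩ := hmem
      obtain ⟨a', b', ψ'⟩ := p
      rw [LP.co_w, mul_add, mul_add, mul_smul_comm,
        Algebra.TensorProduct.tmul_mul_tmul, Algebra.TensorProduct.tmul_mul_tmul,
        Algebra.TensorProduct.tmul_mul_tmul,
        bas_mul_x, bas_mul_yg, bas_mul_g]
      split_ifs with h1 h2 h2
      · simp [coordT_tmul, repr_bas, TensorProduct.smul_tmul', Finsupp.single_apply,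
          Prod.mk.injEq, eq_sub_iff_add_eq, ite_smul, ite_mul, smul_smul,
          and_assoc]
        split_ifs with hc
        · rcases hc with ⟨-, -, rfl⟩; rfl
        · rfl
      · simp [coordT_tmul, repr_bas, TensorProduct.smul_tmul', Finsupp.single_apply,
          Prod.mk.injEq, eq_sub_iff_add_eq, ite_smul, ite_mul, smul_smul,
          and_assoc]
        split_ifs with hc
        · rcases hc with ⟨-, -, rfl⟩; rfl
        · rfl
      · have ha' : a' ≠ 0 := by rintro rfl; rw [Fin.val_zero] at h1; omega
        simp [coordT_tmul, repr_bas, TensorProduct.smul_tmul', Finsupp.single_apply,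
          Prod.mk.injEq, eq_sub_iff_add_eq, ite_smul, ite_mul, smul_smul,
          and_assoc, ha']
      · have ha' : a' ≠ 0 := by rintro rfl; rw [Fin.val_zero] at h1; omega
        simp [coordT_tmul, repr_bas, TensorProduct.smul_tmul', Finsupp.single_apply,
          Prod.mk.injEq, eq_sub_iff_add_eq, ite_smul, ite_mul, smul_smul,
          and_assoc, ha']


lemma qval [NeZero n] (hq1 : q ^ n = 1) (a : ZMod n) (c : ℕ) :
    q ^ ((a + (c : ZMod n)).val) = q ^ a.val * q ^ c := by
  have hmod : ∀ s : ℕ, q ^ s = q ^ (s % n) := by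
    intro s
    conv_lhs => rw [← Nat.mod_add_div s n]
    rw [pow_add, pow_mul, hq1, one_pow, mul_one]
  rw [← pow_add, hmod (a.val + c)]
  congr 1
  rw [ZMod.val_add, ZMod.val_natCast]
  conv_rhs => rw [Nat.add_mod]
  rw [Nat.mod_eq_of_lt a.val_lt]

lemma smul_e1 (m : ℕ) : m • ((1, 0) : GGrp n) = (((m : ℕ) : ZMod n), 0) := by
  ext
  · simp [nsmul_eq_mul]
  · simp

lemma c0_mul_w [NeZero n] (φ : GGrp n) (a : A) :
    coordT P (0, 0, φ) (co.ρ (a * LP.w)) =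
      coordT P (0, 0, φ - (1, 0)) (co.ρ a) * LP.w := by
  rw [map_mul]; exact M0 P LP φ _

lemma c1_mul_w [NeZero n] (hn1 : 1 < n) (φ : GGrp n) (a : A) :
    coordT P (⟨1, hn1⟩, 0, φ) (co.ρ (a * LP.w)) =
      (ξ * q ^ φ.1.val) • coordT P (0, 0, φ) (co.ρ a) +
        coordT P (⟨1, hn1⟩, 0, φ - (1, 0)) (co.ρ a) * LP.w := by
  rw [map_mul]; exact M1 P LP hn1 φ _

lemma c0_e [NeZero n] (φ : GGrp n) (f : F) :
    coordT P (0, 0, φ) (co.ρ (LP.e f)) = if φ = ↑f then LP.e f else 0 := by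
  rw [LP.co_e, ← bas_zero_eq, coordT_tmul, repr_bas]
  simp [Prod.mk.injEq, eq_comm, ite_smul]

lemma c1_e [NeZero n] (hn1 : 1 < n) (φ : GGrp n) (f : F) :
    coordT P (⟨1, hn1⟩, 0, φ) (co.ρ (LP.e f)) = 0 := by
  rw [LP.co_e, ← bas_zero_eq, coordT_tmul, repr_bas]
  simp [Prod.mk.injEq, Fin.ext_iff]

lemma C0 [NeZero n] (f : F) (m : ℕ) (φ : GGrp n) :
    coordT P (0, 0, φ) (co.ρ (LP.e f * LP.w ^ m)) =
      if φ = (↑f : GGrp n) + m • ((1, 0) : GGrp n) then LP.e f * LP.w ^ m else 0 := by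
  induction m generalizing φ with
  | zero => simp [c0_e P LP φ f, eq_comm]
  | succ m ih =>
    rw [pow_succ, ← mul_assoc, c0_mul_w P LP, ih]
    by_cases hc : φ = (↑f : GGrp n) + (m + 1) • ((1, 0) : GGrp n)
    · have hc' : φ - (1, 0) = (↑f : GGrp n) + m • ((1, 0) : GGrp n) := by
        rw [hc, succ_nsmul, ← add_assoc, add_sub_cancel_right]
      rw [if_pos hc', if_pos hc, mul_assoc, ← pow_succ]
    · have hc' : ¬ (φ - (1, 0) = (↑f : GGrp n) + m • ((1, 0) : GGrp n)) := by
        intro h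
        apply hc
        rw [sub_eq_iff_eq_add] at h
        rw [succ_nsmul, ← add_assoc]
        exact h
      rw [if_neg hc', if_neg hc, zero_mul]

lemma C1 [NeZero n] (hq1 : q ^ n = 1) (hn1 : 1 < n) (f : F) (m : ℕ) (φ : GGrp n) :
    coordT P (⟨1, hn1⟩, 0, φ) (co.ρ (LP.e f * LP.w ^ (m + 1))) =
      if φ = (↑f : GGrp n) + m • ((1, 0) : GGrp n) then
        (ξ * q ^ (f : GGrp n).1.val * (∑ i ∈ Finset.range (m + 1), q ^ i)) •
          (LP.e f * LP.w ^ m)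
      else 0 := by
  induction m generalizing φ with
  | zero =>
    rw [pow_one, c1_mul_w P LP hn1, c0_e P LP, c1_e P LP hn1, zero_mul, add_zero]
    by_cases hc : φ = ↑f
    · subst hc
      rw [if_pos rfl, if_pos (by simp)]
      simp
    · rw [if_neg hc, smul_zero, if_neg (by simpa [eq_comm] using hc)]
  | succ m ih =>
    rw [pow_succ, ← mul_assoc, c1_mul_w P LP hn1, C0 P LP, ih]
    by_cases hc : φ = (↑f : GGrp n) + (m + 1) • ((1, 0) : GGrp n)
    · have hc' : φ - (1, 0) = (↑f : GGrp n) + m • ((1, 0) : GGrp n) := by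
        rw [hc, succ_nsmul, ← add_assoc, add_sub_cancel_right]
      rw [if_pos hc', if_pos hc, if_pos hc]
      have hφ1 : φ.1 = (f : GGrp n).1 + ((m + 1 : ℕ) : ZMod n) := by
        rw [hc, smul_e1]; rfl
      have hφq : q ^ φ.1.val = q ^ (f : GGrp n).1.val * q ^ (m + 1) := by
        rw [hφ1, qval hq1]
      rw [hφq, smul_mul_assoc, mul_assoc (LP.e f) (LP.w ^ m) LP.w, ← pow_succ, ← add_smul]
      congr 1
      rw [Finset.sum_range_succ (fun i => q ^ i) (m + 1)]
      ring
    · have hc' : ¬ (φ - (1, 0) = (↑f : GGrp n) + m • ((1, 0) : GGrp n)) := by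
        intro h
        apply hc
        rw [sub_eq_iff_eq_add] at h
        rw [succ_nsmul, ← add_assoc]
        exact h
      rw [if_neg hc', if_neg hc, if_neg hc, smul_zero, zero_mul, add_zero]

end Statement9Com
/-- For any subgroup `F ⊆ G` with `(g,g) ∈ F`, any 2-cocycle `ψ`
compatible with `F`, and any `ξ ∈ k^×`, `μ ∈ k`, the algebra `L(ξ,μ,F,ψ)` is a right
`H`-simple left `H`-comodule algebra with trivial coinvariants (`H = T_q ⊗ T_{q⁻¹}`). -/
theorem LPres_rightHSimple_trivialCoinv
    {k : Type*} [Field k] [IsAlgClosed k] [CharZero k]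
    {n : ℕ} (hn : 2 ≤ n) {q : k} (hq : IsPrimitiveRoot q n)
    {H : Type*} [Ring H] [HopfAlgebra k H] (P : HPres k n q 1 1 H)
    (F : AddSubgroup (GGrp n)) (hF : ((1 : ZMod n), (1 : ZMod n)) ∈ F)
    (ψ : Cocycle2 (GGrp n) k) (hcomp : CocycleCompatible q ψ F)
    (ξ μ : k) (hξ : ξ ≠ 0)
    {A : Type*} [Ring A] [Algebra k A] (co : LeftComodAlg k H A)
    (LP : LPres k n q H P F hF ψ ξ μ co) :
    co.RightHSimple ∧ co.TrivialCoinv := by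
  have hn1 : 1 < n := hn
  haveI : NeZero n := ⟨by omega⟩
  haveI : Fintype F := Fintype.ofFinite F
  have hq1 : q ^ n = 1 := hq.pow_eq_one
  have hq0 : q ≠ 0 := by
    intro h
    rw [h, zero_pow (by omega : n ≠ 0)] at hq1
    exact zero_ne_one hq1
  have hGm : ∀ m : ℕ, m + 1 < n → (∑ i ∈ Finset.range (m + 1), q ^ i) ≠ 0 := by
    intro m hm h0
    have hg : (∑ i ∈ Finset.range (m + 1), q ^ i) * (q - 1) = q ^ (m + 1) - 1 :=
      geom_sum_mul q (m + 1)
    rw [h0, zero_mul] at hg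
    exact hq.pow_ne_one_of_pos_of_lt (Nat.succ_ne_zero m) hm (sub_eq_zero.mp hg.symm)
  -- the basis of A
  let B : Module.Basis (F × Fin n) k A := Module.Basis.mk LP.li LP.span
  have hB : ∀ p : F × Fin n, B p = LP.e p.1 * LP.w ^ ((p.2 : ℕ)) := fun p =>
    Module.Basis.mk_apply _ _ _
  have hBm : ∀ (f : F) (m : ℕ) (h : m < n),
      LP.e f * LP.w ^ m = B (f, ⟨m, h⟩) := fun f m h => (hB (f, ⟨m, h⟩)).symm
  -- expansion lemmas
  have hexp : ∀ (a : A) (pp : Fin n × Fin n × GGrp n),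
      coordT P pp (co.ρ a) = ∑ p' : F × Fin n, B.repr a p' • coordT P pp (co.ρ (B p')) := by
    intro a pp
    conv_lhs => rw [← B.sum_repr a]
    rw [map_sum, map_sum]
    exact Finset.sum_congr rfl fun p' _ => by rw [map_smul, map_smul]
  have hrepr : ∀ (a : A) (pp : Fin n × Fin n × GGrp n) (r : F × Fin n),
      B.repr (coordT P pp (co.ρ a)) r
        = ∑ p' : F × Fin n, B.repr a p' * B.repr (coordT P pp (co.ρ (B p'))) r := by
    intro a pp r
    rw [hexp a pp, map_sum, Finsupp.finset_sum_apply]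
    exact Finset.sum_congr rfl fun p' _ => by
      rw [map_smul, Finsupp.smul_apply, smul_eq_mul]
  -- evaluation of the coordinates on basis vectors
  have key0 : ∀ (φ : GGrp n) (p : F × Fin n),
      coordT P (0, 0, φ) (co.ρ (B p)) =
        if φ = (↑p.1 : GGrp n) + (p.2 : ℕ) • ((1, 0) : GGrp n) then B p else 0 := by
    intro φ p
    rw [hB p]
    exact C0 P LP p.1 _ φ
  have key1 : ∀ (φ : GGrp n) (p : F × Fin n) (m : ℕ), (p.2 : ℕ) = m + 1 →
      coordT P (⟨1, hn1⟩, 0, φ) (co.ρ (B p)) =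
        if φ = (↑p.1 : GGrp n) + m • ((1, 0) : GGrp n) then
          (ξ * q ^ ((p.1 : GGrp n)).1.val * (∑ i ∈ Finset.range (m + 1), q ^ i)) •
            (LP.e p.1 * LP.w ^ m) else 0 := by
    intro φ p m hm
    rw [hB p, hm]
    exact C1 P LP hq1 hn1 p.1 m φ
  have key1z : ∀ (φ : GGrp n) (p : F × Fin n), (p.2 : ℕ) = 0 →
      coordT P (⟨1, hn1⟩, 0, φ) (co.ρ (B p)) = 0 := by
    intro φ p h0
    rw [hB p, h0, pow_zero, mul_one]
    exact c1_e P LP hn1 φ p.1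
  -- single-coefficient extraction for the degree-one coordinate
  have reprL1 : ∀ (a : A) (p : F × Fin n) (m : ℕ) (hm : (p.2 : ℕ) = m + 1) (hmn : m < n),
      B.repr (coordT P (⟨1, hn1⟩, 0, (↑p.1 : GGrp n) + m • ((1, 0) : GGrp n)) (co.ρ a))
          (p.1, ⟨m, hmn⟩)
        = B.repr a p *
            (ξ * q ^ ((p.1 : GGrp n)).1.val * (∑ i ∈ Finset.range (m + 1), q ^ i)) := by
    intro a p m hm hmn
    rw [hrepr]
    rw [Finset.sum_eq_single p]
    · rw [key1 _ p m hm, if_pos rfl, hBm p.1 m hmn, map_smul, Finsupp.smul_apply,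
        B.repr_self, Finsupp.single_apply, if_pos rfl]
      simp [smul_eq_mul]
    · intro p' _ hne
      rcases Nat.eq_zero_or_pos (p'.2 : ℕ) with h0' | h0'
      · rw [key1z _ p' h0']; simp
      · obtain ⟨m', hm'⟩ : ∃ m', (p'.2 : ℕ) = m' + 1 := ⟨(p'.2 : ℕ) - 1, by omega⟩
        have hm'n : m' < n := by have := p'.2.isLt; omega
        rw [key1 _ p' m' hm', hBm p'.1 m' hm'n]
        split_ifs with hcc
        · rw [map_smul, Finsupp.smul_apply, B.repr_self, Finsupp.single_apply]
          rw [if_neg ?_]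
          · simp
          · intro hee
            apply hne
            have h12 := Prod.ext_iff.mp hee
            have h1 : p'.1 = p.1 := h12.1
            have h2 : m' = m := by
              have := h12.2
              simpa [Fin.ext_iff] using this
            have h3 : p'.2 = p.2 := by
              apply Fin.ext
              rw [hm', hm, h2]
            exact Prod.ext h1 h3
        · simp
    · intro hmem
      exact absurd (Finset.mem_univ p) hmem
  -- degree lowering for the degree-one coordinate
  have reprLow : ∀ (a : A) (m : ℕ) (φ : GGrp n),
      (∀ p' : F × Fin n, m + 1 < (p'.2 : ℕ) → B.repr a p' = 0) →
      ∀ r : F × Fin n, m < (r.2 : ℕ) →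
        B.repr (coordT P (⟨1, hn1⟩, 0, φ) (co.ρ a)) r = 0 := by
    intro a m φ hd r hr
    rw [hrepr]
    apply Finset.sum_eq_zero
    intro p' _
    rcases Nat.eq_zero_or_pos (p'.2 : ℕ) with h0' | h0'
    · rw [key1z _ p' h0']; simp
    · obtain ⟨m', hm'⟩ : ∃ m', (p'.2 : ℕ) = m' + 1 := ⟨(p'.2 : ℕ) - 1, by omega⟩
      have hm'n : m' < n := by have := p'.2.isLt; omega
      rw [key1 _ p' m' hm', hBm p'.1 m' hm'n]
      split_ifs with hcc
      · by_cases hbig : m + 1 < (p'.2 : ℕ)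
        · rw [hd p' hbig, zero_mul]
        · rw [map_smul, Finsupp.smul_apply, B.repr_self, Finsupp.single_apply, if_neg ?_]
          · simp
          · intro hee
            have h2 : m' = (r.2 : ℕ) := by
              have := congrArg (fun z : F × Fin n => (z.2 : ℕ)) hee
              simpa using this
            omega
      · simp
  -- extraction for the group-like coordinate on "degree zero" elements
  have reprL0 : ∀ (a : A) (f : F),
      (∀ p' : F × Fin n, 0 < (p'.2 : ℕ) → B.repr a p' = 0) →
      coordT P (0, 0, (↑f : GGrp n)) (co.ρ a) = B.repr a (f, 0) • LP.e f := by
    intro a f hd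
    rw [hexp a]
    rw [Finset.sum_eq_single ((f, 0) : F × Fin n)]
    · rw [key0, if_pos ?_, hB]
      · simp [LP.e_zero]
      · simp
    · intro p' _ hne
      rcases Nat.eq_zero_or_pos (p'.2 : ℕ) with h0' | h0'
      · rw [key0]
        rw [if_neg ?_]
        · simp
        · intro hee
          apply hne
          rw [h0', zero_smul, add_zero] at hee
          have h1 : p'.1 = f := Subtype.ext hee.symm
          have h2 : p'.2 = 0 := Fin.ext (by simpa using h0')
          exact Prod.ext h1 h2
      · rw [hd p' h0', zero_smul]
    · intro hmem
      exact absurd (Finset.mem_univ _) hmem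
  -- coordinates of coinvariants / costable elements
  have hscal : ∀ (p : F × Fin n) (m : ℕ), (p.2 : ℕ) = m + 1 →
      ξ * q ^ ((p.1 : GGrp n)).1.val * (∑ i ∈ Finset.range (m + 1), q ^ i) ≠ 0 := by
    intro p m hm
    have hmn : m + 1 < n := by have := p.2.isLt; omega
    exact mul_ne_zero (mul_ne_zero hξ (pow_ne_zero _ hq0)) (hGm m hmn)
  constructor
  · -- Right H-simplicity
    intro I hmul hco
    by_cases hbot : I = ⊥
    · exact Or.inl hbot
    right
    -- coordinates stay in I
    have hLmI : ∀ (pp : Fin n × Fin n × GGrp n), ∀ a ∈ I, coordT P pp (co.ρ a) ∈ I := by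
      intro pp a ha
      obtain ⟨t, ht⟩ := hco a ha
      rw [← ht]
      clear ht
      induction t using TensorProduct.induction_on with
      | zero => simp
      | tmul h i =>
        rw [LinearMap.lTensor_tmul, coordT_tmul]
        exact I.smul_mem _ i.2
      | add u v hu hv =>
        rw [map_add, map_add]
        exact I.add_mem hu hv
    -- descent: some e f lies in I
    have descent : ∀ m : ℕ, ∀ a ∈ I, a ≠ 0 →
        (∀ p : F × Fin n, m < (p.2 : ℕ) → B.repr a p = 0) → ∃ f : F, LP.e f ∈ I := by
      intro m
      induction m with
      | zero =>
        intro a haI ha0 hd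
        obtain ⟨p₀, hp₀⟩ : ∃ p₀, B.repr a p₀ ≠ 0 := by
          by_contra hc
          push_neg at hc
          apply ha0
          have : B.repr a = 0 := Finsupp.ext fun p => hc p
          have := congrArg (B.repr.symm) this
          simpa using this
        refine ⟨p₀.1, ?_⟩
        have hd0 : ∀ p' : F × Fin n, 0 < (p'.2 : ℕ) → B.repr a p' = 0 := fun p' h =>
          hd p' h
        have hmem := hLmI (0, 0, (↑p₀.1 : GGrp n)) a haI
        have hval := reprL0 a p₀.1 hd0
        rw [hval] at hmem
        have hp02 : (p₀.1, (0 : Fin n)) = p₀ := by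
          refine Prod.ext rfl ?_
          have : (p₀.2 : ℕ) = 0 := by
            by_contra hc
            exact hp₀ (hd p₀ (by omega))
          exact (Fin.ext (by simpa using this.symm))
        rw [hp02] at hmem
        have := I.smul_mem (B.repr a p₀)⁻¹ hmem
        rwa [smul_smul, inv_mul_cancel₀ hp₀, one_smul] at this
      | succ m ih =>
        intro a haI ha0 hd
        by_cases hall : ∀ p : F × Fin n, (p.2 : ℕ) = m + 1 → B.repr a p = 0
        · refine ih a haI ha0 ?_
          intro p hp
          rcases Nat.lt_or_ge (m + 1) (p.2 : ℕ) with h | h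
          · exact hd p h
          · exact hall p (by omega)
        push_neg at hall
        obtain ⟨p₀, hp₀m, hp₀⟩ := hall
        have hmn : m < n := by have := p₀.2.isLt; omega
        set φ := (↑p₀.1 : GGrp n) + m • ((1, 0) : GGrp n) with hφ
        set b := coordT P (⟨1, hn1⟩, 0, φ) (co.ρ a) with hb
        have hbI : b ∈ I := hLmI _ a haI
        have hbne : b ≠ 0 := by
          intro h0
          have := reprL1 a p₀ m hp₀m hmn
          rw [← hφ, ← hb, h0] at this
          simp only [map_zero, Finsupp.zero_apply] at this
          exact hscal p₀ m hp₀m (by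
            rcases mul_eq_zero.mp this.symm with h | h
            · exact absurd h hp₀
            · exact h)
        have hbd : ∀ p : F × Fin n, m < (p.2 : ℕ) → B.repr b p = 0 := by
          intro p hp
          exact reprLow a m φ hd p hp
        exact ih b hbI hbne hbd
    obtain ⟨a, haI, ha0⟩ := Submodule.exists_mem_ne_zero_of_ne_bot hbot
    obtain ⟨f, hf⟩ := descent n a haI ha0 (fun p hp => absurd p.2.isLt (by omega))
    -- 1 ∈ I
    have h1I : (1 : A) ∈ I := by
      have hprod : LP.e f * LP.e (-f) ∈ I := hmul _ hf _
      rw [LP.e_mul, add_neg_cancel, LP.e_zero] at hprod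
      have := I.smul_mem (((ψ.c ↑f ↑(-f) : kˣ) : k))⁻¹ hprod
      rwa [smul_smul, inv_mul_cancel₀ (Units.ne_zero _), one_smul] at this
    rw [Submodule.eq_top_iff']
    intro x
    have := hmul 1 h1I x
    rwa [one_mul] at this
  · -- trivial coinvariants
    intro a hco
    have hc1 : ∀ φ : GGrp n, coordT P (⟨1, hn1⟩, 0, φ) (co.ρ a) = 0 := by
      intro φ
      rw [hco, one_eq_bas P, coordT_tmul, repr_bas]
      rw [if_neg ?_]
      · simp
      · intro hee
        have := congrArg (fun z : Fin n × Fin n × GGrp n => (z.1 : ℕ)) hee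
        simpa using this
    have hvan : ∀ p : F × Fin n, 0 < (p.2 : ℕ) → B.repr a p = 0 := by
      intro p hp
      obtain ⟨m, hm⟩ : ∃ m, (p.2 : ℕ) = m + 1 := ⟨(p.2 : ℕ) - 1, by omega⟩
      have hmn : m < n := by have := p.2.isLt; omega
      have := reprL1 a p m hm hmn
      rw [hc1] at this
      simp only [map_zero, Finsupp.zero_apply] at this
      rcases mul_eq_zero.mp this.symm with h | h
      · exact h
      · exact absurd h (hscal p m hm)
    have hvan0 : ∀ f : F, f ≠ 0 → B.repr a (f, 0) = 0 := by
      intro f hf0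
      have hz : coordT P (0, 0, (↑f : GGrp n)) (co.ρ a) = 0 := by
        rw [hco, one_eq_bas P, coordT_tmul, repr_bas]
        rw [if_neg ?_]
        · simp
        · intro hee
          apply hf0
          have : (0 : GGrp n) = (↑f : GGrp n) := congrArg (fun z : Fin n × Fin n × GGrp n => z.2.2) hee
          exact Subtype.ext this.symm
      rw [reprL0 a f hvan] at hz
      have hef : LP.e f ≠ 0 := by
        have heB : LP.e f = B (f, ⟨0, by omega⟩) := by
          rw [← hBm f 0 (by omega), pow_zero, mul_one]
        rw [heB]
        exact B.ne_zero _
      rcases smul_eq_zero.mp hz with h | h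
      · exact h
      · exact absurd h hef
    refine ⟨B.repr a ((0 : F), (0 : Fin n)), ?_⟩
    have hB00 : B ((0 : F), (0 : Fin n)) = 1 := by
      rw [hB]
      simp [LP.e_zero]
    conv_lhs => rw [← B.sum_repr a]
    rw [Finset.sum_eq_single ((0 : F), (0 : Fin n))]
    · rw [hB00]
    · intro p' _ hne
      rcases Nat.eq_zero_or_pos (p'.2 : ℕ) with h0' | h0'
      · have h2 : p'.2 = 0 := Fin.ext (by simpa using h0')
        have h1 : p'.1 ≠ 0 := by
          intro h
          exact hne (Prod.ext h h2)
        have hp' : p' = (p'.1, (0 : Fin n)) := Prod.ext rfl h2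
        rw [hp', hvan0 p'.1 h1, zero_smul]
      · rw [hvan p' h0', zero_smul]
    · intro hmem
      exact absurd (Finset.mem_univ _) hmem
end
end

section
/- For any a, b, ξ ∈ k (with ξ = 0 unless (g,g^{-1}) ∈ F), any subgroup F ⊆ G and any 2-cocycle ψ ∈ Z²(F,k^×), the algebra K₁₁(a,b,ξ,F,ψ) is a right H-simple left H-comodule algebra with trivial coinvariants. -/
open scoped TensorProduct

noncomputable section

section Aux

variable {k : Type*} [Field k] {n : ℕ} [NeZero n] {q : k}
  {H : Type*} [Ring H] [HopfAlgebra k H] {P : HPres k n q 1 1 H}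
  {A : Type*} [Ring A] [Algebra k A] {co : LeftComodAlg k H A}

lemma HPres.fx' (f : GGrp n) : P.fG f * P.x = q ^ f.1.val • (P.x * P.fG f) := by
  simpa using P.fx f

lemma HPres.fy' (f : GGrp n) : P.fG f * P.y = q ^ f.2.val • (P.y * P.fG f) := by
  simpa using P.fy f

/-- slice a tensor by a functional on the first factor -/
def TPslice {k H A : Type*} [CommRing k] [AddCommGroup H] [Module k H]
    [AddCommGroup A] [Module k A] (φ : H →ₗ[k] k) : H ⊗[k] A →ₗ[k] A :=
  (TensorProduct.lid k A).toLinearMap ∘ₗ TensorProduct.map φ LinearMap.id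

lemma TPslice_tmul {k H A : Type*} [CommRing k] [AddCommGroup H] [Module k H]
    [AddCommGroup A] [Module k A] (φ : H →ₗ[k] k) (h : H) (m : A) :
    TPslice φ (h ⊗ₜ[k] m) = φ h • m := by
  simp [TPslice]

lemma TPslice_mem {k H A : Type*} [CommRing k] [AddCommGroup H] [Module k H]
    [AddCommGroup A] [Module k A] {I : Submodule k A} (φ : H →ₗ[k] k) {t : H ⊗[k] A}
    (ht : t ∈ LinearMap.range (LinearMap.lTensor H I.subtype)) : TPslice φ t ∈ I := by
  obtain ⟨s, rfl⟩ := ht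
  induction s using TensorProduct.induction_on with
  | zero => simpa using I.zero_mem
  | tmul h m => rw [LinearMap.lTensor_tmul, TPslice_tmul]; exact I.smul_mem _ m.2
  | add x y hx hy => rw [map_add, map_add]; exact I.add_mem hx hy

/-- slice a tensor by a functional on the second factor -/
def TPslice2 {k H A : Type*} [CommRing k] [AddCommGroup H] [Module k H]
    [AddCommGroup A] [Module k A] (χ : A →ₗ[k] k) : H ⊗[k] A →ₗ[k] H :=
  (TensorProduct.rid k H).toLinearMap ∘ₗ TensorProduct.map LinearMap.id χ

lemma TPslice2_tmul {k H A : Type*} [CommRing k] [AddCommGroup H] [Module k H]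
    [AddCommGroup A] [Module k A] (χ : A →ₗ[k] k) (h : H) (m : A) :
    TPslice2 χ (h ⊗ₜ[k] m) = χ m • h := by
  simp [TPslice2]

lemma K11_rho_z {a b ξ : k} {F : AddSubgroup (GGrp n)} {ψ : Cocycle2 (GGrp n) k}
    (hq0 : q ≠ 0) (KP : K11Pres k n q H P a b ξ F ψ co) (f : F) :
    ∀ i : ℕ, i < n → ∃ γ : ℕ → k, γ 0 ≠ 0 ∧
      co.ρ (KP.e f * KP.z ^ i) =
        ∑ t ∈ Finset.range (i + 1), γ t •
          ((P.x ^ (i - t) * P.fG (↑f + ((t : ZMod n), (0 : ZMod n)))) ⊗ₜ[k]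
            (KP.e f * KP.z ^ t)) := by
  intro i
  induction i with
  | zero =>
    intro _
    refine ⟨fun _ => 1, one_ne_zero, ?_⟩
    simp [KP.co_e f, Prod.mk_zero_zero]
  | succ i ih =>
    intro hi1
    obtain ⟨γ, hγ0, hγ⟩ := ih (by omega)
    refine ⟨fun t =>
      (if t ≤ i then γ t * q ^ ((↑f + ((t : ZMod n), (0 : ZMod n))).1.val) else 0)
        + (if t = 0 then 0 else γ (t - 1)), ?_, ?_⟩
    · simp only [Nat.zero_le, if_pos rfl, if_true, add_zero]
      exact mul_ne_zero hγ0 (pow_ne_zero _ hq0)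
    · have hmul : KP.e f * KP.z ^ (i + 1) = (KP.e f * KP.z ^ i) * KP.z := by
        rw [pow_succ, mul_assoc]
      rw [hmul, map_mul, hγ, KP.co_z, mul_add, Finset.sum_mul, Finset.sum_mul]
      simp only [add_smul, Finset.sum_add_distrib]
      congr 1
      · conv_rhs => rw [Finset.sum_range_succ]
        rw [if_neg (by omega), zero_smul, add_zero]
        refine Finset.sum_congr rfl fun t ht => ?_
        have ht' : t ≤ i := Finset.mem_range_succ_iff.mp ht
        rw [if_pos ht', smul_mul_assoc, Algebra.TensorProduct.tmul_mul_tmul, mul_one,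
          mul_assoc, P.fx' (↑f + ((t : ZMod n), (0 : ZMod n))), mul_smul_comm,
          ← TensorProduct.smul_tmul', smul_smul, ← mul_assoc, ← pow_succ,
          show i - t + 1 = i + 1 - t from by omega]
      · conv_rhs => rw [Finset.sum_range_succ']
        simp only [Nat.succ_ne_zero, if_false, Nat.add_sub_cancel, reduceIte, zero_smul,
          add_zero]
        refine Finset.sum_congr rfl fun t ht => ?_
        rw [smul_mul_assoc, Algebra.TensorProduct.tmul_mul_tmul, mul_assoc, P.fG_mul,
          mul_assoc, ← pow_succ,
          show (↑f + ((t : ZMod n), (0 : ZMod n))) + ((1 : ZMod n), (0 : ZMod n))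
              = ↑f + (((t + 1 : ℕ) : ZMod n), (0 : ZMod n)) from by
                push_cast
                simp only [Prod.mk_add_mk, Prod.ext_iff, Prod.fst_add, Prod.snd_add]
                constructor <;> ring,
          show i - t = i + 1 - (t + 1) from by omega]

lemma K11_rho {a b ξ : k} {F : AddSubgroup (GGrp n)} {ψ : Cocycle2 (GGrp n) k}
    (hq0 : q ≠ 0) (KP : K11Pres k n q H P a b ξ F ψ co) (f : F) :
    ∀ j i : ℕ, i < n → j < n → ∃ γ : ℕ → ℕ → k, γ 0 0 ≠ 0 ∧
      co.ρ (KP.e f * KP.z ^ i * KP.u ^ j) =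
        ∑ t ∈ Finset.range (i + 1), ∑ s ∈ Finset.range (j + 1),
          γ t s • ((P.x ^ (i - t) * P.y ^ (j - s) *
              P.fG (↑f + ((t : ZMod n), -(s : ZMod n)))) ⊗ₜ[k]
            (KP.e f * KP.z ^ t * KP.u ^ s)) := by
  intro j
  induction j with
  | zero =>
    intro i hi _
    obtain ⟨γ, hγ0, hγ⟩ := K11_rho_z hq0 KP f i hi
    refine ⟨fun t _ => γ t, hγ0, ?_⟩
    have h0 : KP.e f * KP.z ^ i * KP.u ^ 0 = KP.e f * KP.z ^ i := by
      rw [pow_zero, mul_one]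
    rw [h0, hγ]
    refine Finset.sum_congr rfl fun t ht => ?_
    rw [Finset.sum_range_one]
    simp
  | succ j ih =>
    intro i hi hj1
    obtain ⟨γ, hγ0, hγ⟩ := ih i hi (by omega)
    refine ⟨fun t s =>
      (if s ≤ j then γ t s * q ^ ((↑f + ((t : ZMod n), -(s : ZMod n))).2.val) else 0)
        + (if s = 0 then 0 else γ t (s - 1)), ?_, ?_⟩
    · simp only [Nat.zero_le, if_pos rfl, if_true, add_zero]
      exact mul_ne_zero hγ0 (pow_ne_zero _ hq0)
    · have hmul : KP.e f * KP.z ^ i * KP.u ^ (j + 1)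
          = (KP.e f * KP.z ^ i * KP.u ^ j) * KP.u := by
        rw [pow_succ, ← mul_assoc]
      rw [hmul, map_mul, hγ, KP.co_u, mul_add]
      simp only [Finset.sum_mul]
      simp only [add_smul, Finset.sum_add_distrib]
      congr 1
      · refine Finset.sum_congr rfl fun t ht => ?_
        conv_rhs => rw [Finset.sum_range_succ]
        rw [if_neg (by omega), zero_smul, add_zero]
        refine Finset.sum_congr rfl fun s hs => ?_
        have hs' : s ≤ j := Finset.mem_range_succ_iff.mp hs
        rw [if_pos hs', smul_mul_assoc, Algebra.TensorProduct.tmul_mul_tmul, mul_one,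
          mul_assoc (P.x ^ (i - t) * P.y ^ (j - s)),
          P.fy' (↑f + ((t : ZMod n), -(s : ZMod n))), mul_smul_comm,
          ← TensorProduct.smul_tmul', smul_smul, ← mul_assoc,
          mul_assoc (P.x ^ (i - t)), ← pow_succ,
          show j - s + 1 = j + 1 - s from by omega]
      · refine Finset.sum_congr rfl fun t ht => ?_
        conv_rhs => rw [Finset.sum_range_succ']
        simp only [Nat.succ_ne_zero, if_false, Nat.add_sub_cancel, reduceIte, zero_smul,
          add_zero]
        refine Finset.sum_congr rfl fun s hs => ?_
        rw [smul_mul_assoc, Algebra.TensorProduct.tmul_mul_tmul,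
          mul_assoc (P.x ^ (i - t) * P.y ^ (j - s)), P.fG_mul,
          mul_assoc (KP.e f * KP.z ^ t), ← pow_succ,
          show (↑f + ((t : ZMod n), -(s : ZMod n))) + ((0 : ZMod n), (-1 : ZMod n))
              = ↑f + ((t : ZMod n), -((s + 1 : ℕ) : ZMod n)) from by
            push_cast
            simp only [Prod.mk_add_mk, Prod.ext_iff, Prod.fst_add, Prod.snd_add]
            constructor <;> ring,
          show j - s = j + 1 - (s + 1) from by omega]

end Aux
/-- For any `a, b, ξ ∈ k` (with `ξ = 0` unless `(g,g⁻¹) ∈ F`), any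
subgroup `F ⊆ G` and any 2-cocycle `ψ ∈ Z²(F,k^×)`, the algebra `K₁₁(a,b,ξ,F,ψ)` is a
right `H`-simple left `H`-comodule algebra with trivial coinvariants. -/
theorem K11Pres_rightHSimple_trivialCoinv
    {k : Type*} [Field k] [IsAlgClosed k] [CharZero k]
    {n : ℕ} (hn : 2 ≤ n) {q : k} (hq : IsPrimitiveRoot q n)
    {H : Type*} [Ring H] [HopfAlgebra k H] (P : HPres k n q 1 1 H)
    (a b ξ : k) (F : AddSubgroup (GGrp n))
    (hξ : ((1 : ZMod n), (-1 : ZMod n)) ∉ F → ξ = 0)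
    (ψ : Cocycle2 (GGrp n) k)
    {A : Type*} [Ring A] [Algebra k A] (co : LeftComodAlg k H A)
    (KP : K11Pres k n q H P a b ξ F ψ co) :
    co.RightHSimple ∧ co.TrivialCoinv := by
  classical
  haveI : NeZero n := ⟨by omega⟩
  haveI : Fintype F := Fintype.ofFinite F
  have hq0 : q ≠ 0 := hq.ne_zero (by omega)
  set BA : Module.Basis (F × Fin n × Fin n) k A := Module.Basis.mk KP.li KP.span with hBAdef
  have hBA : ∀ p : F × Fin n × Fin n,
      BA p = KP.e p.1 * KP.z ^ (p.2.1 : ℕ) * KP.u ^ (p.2.2 : ℕ) :=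
    fun p => Module.Basis.mk_apply _ _ _
  have hch := fun p : F × Fin n × Fin n =>
    K11_rho hq0 KP p.1 (p.2.2 : ℕ) (p.2.1 : ℕ) p.2.1.isLt p.2.2.isLt
  choose γ hγ0 hγ using hch
  have hHbas : ∀ (i' j' : ℕ) (hi' : i' < n) (hj' : j' < n) (g : GGrp n),
      P.x ^ i' * P.y ^ j' * P.fG g = P.bas (⟨i', hi'⟩, ⟨j', hj'⟩, g) :=
    fun i' j' hi' hj' g => (P.bas_eq (⟨i', hi'⟩, ⟨j', hj'⟩, g)).symm
  have hone : (1 : H) = P.bas (0, 0, (0 : GGrp n)) := by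
    rw [P.bas_eq]; simp [P.fG_zero]
  have hcoord : ∀ h₀ p : Fin n × Fin n × GGrp n,
      P.bas.coord h₀ (P.bas p) = if p = h₀ then 1 else 0 := by
    intro h₀ p; rw [Module.Basis.coord_apply, Module.Basis.repr_self, Finsupp.single_apply]
  have hAcoord : ∀ p₀ p : F × Fin n × Fin n,
      BA.coord p₀ (BA p) = if p = p₀ then 1 else 0 := by
    intro p₀ p; rw [Module.Basis.coord_apply, Module.Basis.repr_self, Finsupp.single_apply]
  have hsub : ∀ (i' : Fin n) (t : ℕ), (i' : ℕ) - t < n :=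
    fun i' t => lt_of_le_of_lt (Nat.sub_le _ _) i'.isLt
  have hidx0 : ∀ (i' j' : Fin n) (g : GGrp n),
      ((⟨(i' : ℕ) - 0, hsub i' 0⟩ : Fin n), (⟨(j' : ℕ) - 0, hsub j' 0⟩ : Fin n),
        g + (((0 : ℕ) : ZMod n), -((0 : ℕ) : ZMod n))) = (i', j', g) := by
    intro i' j' g
    simp [Prod.mk_zero_zero]
  constructor
  · -- Right H-simplicity
    intro I hIdeal hcost
    by_cases hIbot : I = ⊥
    · exact Or.inl hIbot
    right
    obtain ⟨v, hvI, hv0⟩ := (Submodule.ne_bot_iff I).mp hIbot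
    set c := BA.repr v with hc
    have hcsupp : c.support.Nonempty := Finsupp.support_nonempty_iff.mpr fun h =>
      hv0 (by rw [← LinearEquiv.symm_apply_apply BA.repr v, ← hc, h, map_zero])
    set i₀ : ℕ := c.support.sup fun p => (p.2.1 : ℕ) with hi₀
    set S₁ := c.support.filter (fun p => (p.2.1 : ℕ) = i₀) with hS₁
    have hS₁ne : S₁.Nonempty := by
      obtain ⟨p, hp, hpe⟩ := Finset.exists_mem_eq_sup c.support hcsupp fun p => (p.2.1 : ℕ)
      exact ⟨p, Finset.mem_filter.mpr ⟨hp, hpe.symm⟩⟩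
    set j₀ : ℕ := S₁.sup fun p => (p.2.2 : ℕ) with hj₀
    obtain ⟨p₀, hp₀S₁, hp₀j⟩ := Finset.exists_mem_eq_sup S₁ hS₁ne fun p => (p.2.2 : ℕ)
    have hp₀supp : p₀ ∈ c.support := (Finset.mem_filter.mp hp₀S₁).1
    have hp₀i : (p₀.2.1 : ℕ) = i₀ := (Finset.mem_filter.mp hp₀S₁).2
    set h₀ : Fin n × Fin n × GGrp n := (p₀.2.1, p₀.2.2, (↑p₀.1 : GGrp n)) with hh₀
    have hDmem : TPslice (P.bas.coord h₀) (co.ρ v) ∈ I := TPslice_mem _ (hcost v hvI)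
    -- the delta vanishing fact
    have hdelta : ∀ p ∈ c.support, ∀ t ∈ Finset.range ((p.2.1 : ℕ) + 1),
        ∀ s ∈ Finset.range ((p.2.2 : ℕ) + 1), (p ≠ p₀ ∨ (t, s) ≠ (0, 0)) →
        ((⟨(p.2.1 : ℕ) - t, hsub p.2.1 t⟩ : Fin n), (⟨(p.2.2 : ℕ) - s, hsub p.2.2 s⟩ : Fin n),
          (↑p.1 : GGrp n) + ((t : ZMod n), -(s : ZMod n))) ≠ h₀ := by
      intro p hp t ht s hs hor heq
      rw [hh₀, Prod.mk.injEq, Prod.mk.injEq] at heq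
      obtain ⟨h1, h2, h3⟩ := heq
      have h1' : (p.2.1 : ℕ) - t = (p₀.2.1 : ℕ) := congrArg Fin.val h1
      have h2' : (p.2.2 : ℕ) - s = (p₀.2.2 : ℕ) := congrArg Fin.val h2
      have hle1 : (p.2.1 : ℕ) ≤ i₀ := Finset.le_sup (f := fun p => (p.2.1 : ℕ)) hp
      have ht' : t ≤ (p.2.1 : ℕ) := Finset.mem_range_succ_iff.mp ht
      have hs' : s ≤ (p.2.2 : ℕ) := Finset.mem_range_succ_iff.mp hs
      have hti : t = 0 ∧ (p.2.1 : ℕ) = i₀ := by omega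
      have hpS₁ : p ∈ S₁ := Finset.mem_filter.mpr ⟨hp, hti.2⟩
      have hle2 : (p.2.2 : ℕ) ≤ j₀ := Finset.le_sup (f := fun p => (p.2.2 : ℕ)) hpS₁
      have hsj : s = 0 ∧ (p.2.2 : ℕ) = (p₀.2.2 : ℕ) := by omega
      obtain ⟨rfl, hj⟩ := hsj
      obtain ⟨rfl, hi⟩ := hti
      have hf : p.1 = p₀.1 := Subtype.coe_injective (by
        have := h3
        simpa [Prod.mk_zero_zero] using this)
      have : p = p₀ := by
        refine Prod.ext hf (Prod.ext (Fin.ext ?_) (Fin.ext h2'))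
        rw [hi, ← hp₀i]
      rcases hor with h | h
      · exact h this
      · exact h rfl
    have hD : TPslice (P.bas.coord h₀) (co.ρ v)
        = c p₀ • (γ p₀ 0 0 • KP.e p₀.1) := by
      conv_lhs => rw [← BA.sum_repr v]
      rw [map_sum, map_sum]
      simp only [map_smul]
      rw [Finset.sum_eq_single p₀ ?side1 (fun h => absurd (Finset.mem_univ _) h)]
      case side1 =>
        intro p _ hne
        by_cases hps : p ∈ c.support
        · rw [hBA p, hγ p, map_sum]
          rw [Finset.sum_eq_zero, smul_zero]
          intro t ht
          rw [map_sum, Finset.sum_eq_zero]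
          intro s hs
          rw [map_smul, TPslice_tmul,
            hHbas _ _ (hsub p.2.1 t) (hsub p.2.2 s), hcoord,
            if_neg (hdelta p hps t ht s hs (Or.inl hne)), zero_smul, smul_zero]
        · rw [show c p = 0 from Finsupp.notMem_support_iff.mp hps, zero_smul]
      congr 1
      rw [hBA p₀, hγ p₀, map_sum]
      rw [Finset.sum_eq_single 0 ?s1 (fun h => absurd (Finset.mem_range.mpr (by omega)) h)]
      case s1 =>
        intro t ht htne
        rw [map_sum, Finset.sum_eq_zero]
        intro s hs
        rw [map_smul, TPslice_tmul, hHbas _ _ (hsub p₀.2.1 t) (hsub p₀.2.2 s), hcoord,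
          if_neg (hdelta p₀ hp₀supp t ht s hs (Or.inr (by simp [htne]))), zero_smul, smul_zero]
      rw [map_sum]
      rw [Finset.sum_eq_single 0 ?s2 (fun h => absurd (Finset.mem_range.mpr (by omega)) h)]
      case s2 =>
        intro s hs hsne
        rw [map_smul, TPslice_tmul, hHbas _ _ (hsub p₀.2.1 0) (hsub p₀.2.2 s), hcoord,
          if_neg (hdelta p₀ hp₀supp 0 (by simp) s hs (Or.inr (by simp [hsne]))), zero_smul,
          smul_zero]
      rw [map_smul, TPslice_tmul, hHbas _ _ (hsub p₀.2.1 0) (hsub p₀.2.2 0), hcoord,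
        if_pos (hidx0 p₀.2.1 p₀.2.2 ↑p₀.1), one_smul]
      simp
    have hcp₀ : c p₀ ≠ 0 := Finsupp.mem_support_iff.mp hp₀supp
    have he : KP.e p₀.1 ∈ I := by
      have hmem := I.smul_mem (c p₀ * γ p₀ 0 0)⁻¹ hDmem
      rw [hD, smul_smul, smul_smul, mul_assoc,
        inv_mul_cancel₀ (mul_ne_zero hcp₀ (hγ0 p₀)), one_smul] at hmem
      exact hmem
    have h1 : (1 : A) ∈ I := by
      have h2 := hIdeal _ he ((((ψ.c ↑p₀.1 ↑(-p₀.1) : kˣ) : k)⁻¹) • KP.e (-p₀.1))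
      rw [mul_smul_comm, KP.e_mul, smul_smul, add_neg_cancel, KP.e_zero,
        inv_mul_cancel₀ (Units.ne_zero _), one_smul] at h2
      exact h2
    rw [Submodule.eq_top_iff']
    intro x'
    simpa using hIdeal 1 h1 x'
  · -- trivial coinvariants
    intro v hv
    set c := BA.repr v with hc
    have hkey : ∀ p' : F × Fin n × Fin n, p' ≠ ((0 : F), 0, 0) → c p' = 0 := by
      intro p' hp'
      set h₀ : Fin n × Fin n × GGrp n := (p'.2.1, p'.2.2, (↑p'.1 : GGrp n)) with hh₀
      set χ : A →ₗ[k] k := BA.coord (p'.1, 0, 0) with hχ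
      have hRHS : P.bas.coord h₀ (TPslice2 χ (co.ρ v)) = 0 := by
        rw [hv, TPslice2_tmul, map_smul, hone, hcoord, if_neg, smul_zero]
        intro heq
        rw [hh₀, Prod.mk.injEq, Prod.mk.injEq] at heq
        obtain ⟨h1, h2, h3⟩ := heq
        have hf : p'.1 = 0 := Subtype.coe_injective h3.symm
        exact hp' (Prod.ext hf (Prod.ext h1.symm h2.symm))
      have hLHS : P.bas.coord h₀ (TPslice2 χ (co.ρ v)) = c p' * γ p' 0 0 := by
        conv_lhs => rw [← BA.sum_repr v]
        rw [map_sum, map_sum, map_sum]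
        simp only [map_smul]
        rw [Finset.sum_eq_single p' ?t1 (fun h => absurd (Finset.mem_univ _) h)]
        case t1 =>
          intro p _ hne
          rw [hBA p, hγ p]
          simp only [map_sum, map_smul]
          rw [Finset.sum_eq_zero, smul_zero]
          intro t ht
          rw [Finset.sum_eq_zero]
          intro s hs
          have htn : t < n :=
            lt_of_le_of_lt (Finset.mem_range_succ_iff.mp ht) p.2.1.isLt
          have hsn : s < n :=
            lt_of_le_of_lt (Finset.mem_range_succ_iff.mp hs) p.2.2.isLt
          rw [TPslice2_tmul, map_smul,
            show KP.e p.1 * KP.z ^ t * KP.u ^ s = BA (p.1, ⟨t, htn⟩, ⟨s, hsn⟩) from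
              (hBA (p.1, ⟨t, htn⟩, ⟨s, hsn⟩)).symm, hAcoord]
          by_cases hc1 : ((p.1, ⟨t, htn⟩, ⟨s, hsn⟩) : F × Fin n × Fin n) = (p'.1, 0, 0)
          · have hc2 := hc1
            rw [Prod.mk.injEq, Prod.mk.injEq] at hc2
            obtain ⟨hf1, hf2, hf3⟩ := hc2
            have ht0 : t = 0 := congrArg Fin.val hf2
            have hs0 : s = 0 := congrArg Fin.val hf3
            subst ht0 hs0
            rw [if_pos hc1, hHbas _ _ (hsub p.2.1 0) (hsub p.2.2 0), hcoord, hidx0, if_neg,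
              smul_zero, smul_zero]
            intro heq
            rw [hh₀, Prod.mk.injEq, Prod.mk.injEq] at heq
            exact hne (Prod.ext hf1 (Prod.ext heq.1 heq.2.1))
          · rw [if_neg hc1, zero_smul, smul_zero]
        rw [hBA p', hγ p']
        simp only [map_sum, map_smul]
        rw [Finset.sum_eq_single 0 ?t2 (fun h => absurd (Finset.mem_range.mpr (by omega)) h)]
        case t2 =>
          intro t ht htne
          rw [Finset.sum_eq_zero]
          intro s hs
          have htn : t < n :=
            lt_of_le_of_lt (Finset.mem_range_succ_iff.mp ht) p'.2.1.isLt
          have hsn : s < n :=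
            lt_of_le_of_lt (Finset.mem_range_succ_iff.mp hs) p'.2.2.isLt
          rw [TPslice2_tmul, map_smul,
            show KP.e p'.1 * KP.z ^ t * KP.u ^ s = BA (p'.1, ⟨t, htn⟩, ⟨s, hsn⟩) from
              (hBA (p'.1, ⟨t, htn⟩, ⟨s, hsn⟩)).symm, hAcoord, if_neg, zero_smul, smul_zero]
          intro heq
          rw [Prod.mk.injEq, Prod.mk.injEq] at heq
          exact htne (congrArg Fin.val heq.2.1)
        rw [Finset.sum_eq_single 0 ?t3 (fun h => absurd (Finset.mem_range.mpr (by omega)) h)]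
        case t3 =>
          intro s hs hsne
          have hsn : s < n :=
            lt_of_le_of_lt (Finset.mem_range_succ_iff.mp hs) p'.2.2.isLt
          rw [TPslice2_tmul, map_smul,
            show KP.e p'.1 * KP.z ^ 0 * KP.u ^ s = BA (p'.1, ⟨0, by omega⟩, ⟨s, hsn⟩) from
              (hBA (p'.1, ⟨0, by omega⟩, ⟨s, hsn⟩)).symm, hAcoord, if_neg, zero_smul, smul_zero]
          intro heq
          rw [Prod.mk.injEq, Prod.mk.injEq] at heq
          exact hsne (congrArg Fin.val heq.2.2)
        rw [TPslice2_tmul, map_smul,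
          show KP.e p'.1 * KP.z ^ 0 * KP.u ^ 0 = BA (p'.1, ⟨0, by omega⟩, ⟨0, by omega⟩) from
            (hBA (p'.1, ⟨0, by omega⟩, ⟨0, by omega⟩)).symm, hAcoord,
          if_pos (by refine Prod.ext rfl (Prod.ext ?_ ?_) <;> exact Fin.ext (by simp)),
          hHbas _ _ (hsub p'.2.1 0) (hsub p'.2.2 0), hcoord, hidx0, if_pos rfl]
        simp [smul_eq_mul, mul_comm, hc]
      have hzero : c p' * γ p' 0 0 = 0 := hLHS.symm.trans hRHS
      exact (mul_eq_zero.mp hzero).resolve_right (hγ0 p')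
    refine ⟨c ((0 : F), 0, 0), ?_⟩
    have hv' : v = c ((0 : F), 0, 0) • BA ((0 : F), 0, 0) := by
      conv_lhs => rw [← BA.sum_repr v]
      rw [Finset.sum_eq_single ((0 : F), 0, 0)
        (fun p _ hne => by rw [hkey p hne, zero_smul])
        (fun h => absurd (Finset.mem_univ _) h)]
    rw [hv', hBA]
    simp [KP.e_zero]
end
end

section
/- For any a, b ∈ k, any subgroup F ⊆ G and any 2-cocycle ψ ∈ Z²(F,k^×), the algebras K₀₁(a,F,ψ) and K₁₀(b,F,ψ) are right H-simple left H-comodule algebras with trivial coinvariants. -/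
open scoped TensorProduct

noncomputable section

section Generic

variable {k : Type*} [Field k] {n : ℕ} {q : k}
  {H : Type*} [Ring H] [HopfAlgebra k H]
  {A : Type*} [Ring A] [Algebra k A]

/-- Generic core lemma covering both `K₀₁` and `K₁₀`. -/
theorem generic_main (hn : 2 ≤ n) (P : HPres k n q 1 1 H)
    (co : LeftComodAlg k H A)
    (F : AddSubgroup (GGrp n)) (ψ : Cocycle2 (GGrp n) k)
    (z : A) (e : F → A) (g₀ : GGrp n) (Xh : H)
    (s : GGrp n → k) (hs : ∀ f, s f ≠ 0) (hs0 : s 0 = 1)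
    (idx : ℕ → GGrp n → Fin n × Fin n × GGrp n)
    (hidx : ∀ m m' h h', m < n → m' < n → idx m h = idx m' h' → m = m' ∧ h = h')
    (hbas : ∀ m h, m < n → P.bas (idx m h) = Xh ^ m * P.fG h)
    (e_zero : e 0 = 1)
    (e_mul : ∀ f f' : F, e f * e f' = ((ψ.c ↑f ↑f' : kˣ) : k) • e (f + f'))
    (hcomm : ∀ f : GGrp n, P.fG f * Xh = s f • (Xh * P.fG f))
    (co_e : ∀ f : F, co.ρ (e f) = P.fG ↑f ⊗ₜ[k] e f)
    (co_z : co.ρ z = Xh ⊗ₜ[k] (1 : A) + P.fG g₀ ⊗ₜ[k] z)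
    (li : LinearIndependent k (fun p : F × Fin n => e p.1 * z ^ (p.2 : ℕ)))
    (span : ⊤ ≤ Submodule.span k (Set.range fun p : F × Fin n => e p.1 * z ^ (p.2 : ℕ))) :
    co.RightHSimple ∧ co.TrivialCoinv := by
  have hn0 : 0 < n := by omega
  -- iterated commutation
  have hcommPow : ∀ (f : GGrp n) (m : ℕ),
      P.fG f * Xh ^ m = (s f ^ m) • (Xh ^ m * P.fG f) := by
    intro f m
    induction m with
    | zero => simp
    | succ m ih =>
      rw [pow_succ, ← mul_assoc, ih, smul_mul_assoc, mul_assoc, hcomm f,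
        mul_smul_comm, smul_smul, ← pow_succ, mul_assoc]
  -- expansion of ρ(z^i)
  have expand : ∀ i : ℕ, ∃ c : ℕ → k, c 0 = 1 ∧ (∀ j, i < j → c j = 0) ∧
      co.ρ (z ^ i) = ∑ j ∈ Finset.range (i + 1),
        c j • ((Xh ^ (i - j) * P.fG (j • g₀)) ⊗ₜ[k] (z ^ j)) := by
    intro i
    induction i with
    | zero =>
      refine ⟨fun j => if j = 0 then 1 else 0, by simp,
        fun j hj => by simp [Nat.pos_iff_ne_zero.mp hj], ?_⟩
      simp [P.fG_zero, Algebra.TensorProduct.one_def]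
    | succ i ih =>
      obtain ⟨c, hc0, hctop, hc⟩ := ih
      refine ⟨fun j => s (j • g₀) * c j + if j = 0 then 0 else c (j - 1),
        (by rw [if_pos rfl, add_zero, zero_nsmul, hs0, hc0, one_mul] :
          s (0 • g₀) * c 0 + ite (0 = 0) (0:k) (c (0-1)) = 1), ?_, ?_⟩
      · intro j hj
        have h1 : c j = 0 := hctop j (by omega)
        have h2 : c (j - 1) = 0 := hctop (j - 1) (by omega)
        simp [h1, h2]
      · have step : co.ρ (z ^ (i + 1)) = co.ρ (z ^ i) * co.ρ z := by
          rw [← map_mul, pow_succ]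
        rw [step, hc, co_z, Finset.sum_mul]
        have key : ∀ j ∈ Finset.range (i + 1),
            c j • ((Xh ^ (i - j) * P.fG (j • g₀)) ⊗ₜ[k] (z ^ j)) *
              (Xh ⊗ₜ[k] (1 : A) + P.fG g₀ ⊗ₜ[k] z) =
            (s (j • g₀) * c j) • ((Xh ^ (i + 1 - j) * P.fG (j • g₀)) ⊗ₜ[k] (z ^ j)) +
            c j • ((Xh ^ (i + 1 - (j + 1)) * P.fG ((j + 1) • g₀)) ⊗ₜ[k] (z ^ (j + 1))) := by
          intro j hj
          have hji : j ≤ i := by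
            have := Finset.mem_range.mp hj; omega
          rw [mul_add]
          congr 1
          · rw [smul_mul_assoc, Algebra.TensorProduct.tmul_mul_tmul, mul_one,
              mul_assoc, hcomm (j • g₀), mul_smul_comm, ← TensorProduct.smul_tmul',
              smul_smul, mul_comm (c j), ← mul_assoc, ← pow_succ,
              (by omega : i - j + 1 = i + 1 - j)]
          · rw [smul_mul_assoc, Algebra.TensorProduct.tmul_mul_tmul, mul_assoc,
              P.fG_mul, ← succ_nsmul, ← pow_succ,
              (by omega : i - j = i + 1 - (j + 1))]
        rw [Finset.sum_congr rfl key, Finset.sum_add_distrib]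
        have e1 : ∑ j ∈ Finset.range (i + 1),
            (s (j • g₀) * c j) • ((Xh ^ (i + 1 - j) * P.fG (j • g₀)) ⊗ₜ[k] (z ^ j)) =
            ∑ j ∈ Finset.range (i + 2),
            (s (j • g₀) * c j) • ((Xh ^ (i + 1 - j) * P.fG (j • g₀)) ⊗ₜ[k] (z ^ j)) := by
          rw [Finset.sum_range_succ (n := i + 1), hctop (i + 1) (by omega)]
          simp
        have e2 : ∑ j ∈ Finset.range (i + 1),
            c j • ((Xh ^ (i + 1 - (j + 1)) * P.fG ((j + 1) • g₀)) ⊗ₜ[k] (z ^ (j + 1))) =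
            ∑ j ∈ Finset.range (i + 2),
            (if j = 0 then 0 else c (j - 1)) •
              ((Xh ^ (i + 1 - j) * P.fG (j • g₀)) ⊗ₜ[k] (z ^ j)) := by
          rw [Finset.sum_range_succ' (fun j =>
            (if j = 0 then 0 else c (j - 1)) •
              ((Xh ^ (i + 1 - j) * P.fG (j • g₀)) ⊗ₜ[k] (z ^ j))) (i + 1)]
          simp
        rw [e1, e2, ← Finset.sum_add_distrib]
        exact Finset.sum_congr rfl fun j _ => by rw [add_smul]
  -- expansion of ρ(e f * z^i)
  have expandE : ∀ (f : F) (i : ℕ), ∃ c : ℕ → k, c 0 = 1 ∧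
      co.ρ (e f * z ^ i) = ∑ j ∈ Finset.range (i + 1),
        (c j * s ↑f ^ (i - j)) •
          ((Xh ^ (i - j) * P.fG (↑f + j • g₀)) ⊗ₜ[k] (e f * z ^ j)) := by
    intro f i
    obtain ⟨c, hc0, _, hc⟩ := expand i
    refine ⟨c, hc0, ?_⟩
    rw [map_mul, hc, co_e, Finset.mul_sum]
    refine Finset.sum_congr rfl fun j _ => ?_
    rw [mul_smul_comm, Algebra.TensorProduct.tmul_mul_tmul, ← mul_assoc,
      hcommPow (↑f) (i - j), smul_mul_assoc, mul_assoc, P.fG_mul,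
      ← TensorProduct.smul_tmul', smul_smul]
  -- the basis of A
  let basA : Module.Basis (F × Fin n) k A := Module.Basis.mk li span
  have basA_eq : ∀ p : F × Fin n, basA p = e p.1 * z ^ (p.2 : ℕ) := fun p => by
    simp [basA]
  -- coordinate values
  have coordVal : ∀ (m m' : ℕ) (h h' : GGrp n), m < n → m' < n →
      P.bas.coord (idx m h) (Xh ^ m' * P.fG h') =
        if m = m' ∧ h = h' then 1 else 0 := by
    intro m m' h h' hm hm'
    rw [← hbas m' h' hm', Module.Basis.coord_apply, Module.Basis.repr_self, Finsupp.single_apply]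
    by_cases heq : m = m' ∧ h = h'
    · rw [if_pos heq, if_pos (by rw [heq.1, heq.2])]
    · rw [if_neg heq, if_neg (fun hh => heq
        ⟨(hidx m' m h' h hm' hm hh).1.symm, (hidx m' m h' h hm' hm hh).2.symm⟩)]
  -- extraction maps
  set Φ : ℕ → GGrp n → (H ⊗[k] A →ₗ[k] A) := fun m h =>
    (TensorProduct.lid k A).toLinearMap ∘ₗ LinearMap.rTensor A (P.bas.coord (idx m h)) with hΦ
  have Φ_tmul : ∀ (m : ℕ) (h : GGrp n) (w : H) (a : A),
      Φ m h (w ⊗ₜ[k] a) = P.bas.coord (idx m h) w • a := by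
    intro m h w a
    simp [Φ, TensorProduct.smul_tmul']
  -- costable transport
  have costTrans : ∀ (I : Submodule k A) (m : ℕ) (h : GGrp n) (t : H ⊗[k] A),
      t ∈ LinearMap.range (LinearMap.lTensor H I.subtype) → Φ m h t ∈ I := by
    intro I m h t ht
    obtain ⟨t', rfl⟩ := ht
    induction t' with
    | zero => simp
    | tmul w a =>
      rw [LinearMap.lTensor_tmul, Φ_tmul]
      exact I.smul_mem _ a.2
    | add t₁ t₂ h₁ h₂ =>
      rw [map_add, map_add]
      exact I.add_mem h₁ h₂
  -- the key extraction computation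
  have extract : ∀ (a : A) (m : ℕ) (hmn : m < n),
      (∀ p ∈ (basA.repr a).support, (p.2 : ℕ) ≤ m) →
      ∀ f₀ : F, Φ m ↑f₀ (co.ρ a) =
        (s ↑f₀ ^ m * basA.repr a (f₀, ⟨m, hmn⟩)) • e f₀ := by
    haveI : NeZero n := ⟨by omega⟩
    haveI : Fintype ↥F := Fintype.ofFinite _
    intro a m hmn hsupp f₀
    set r := basA.repr a with hr
    have ha : ∑ p ∈ r.support, r p • (e p.1 * z ^ (p.2 : ℕ)) = a := by
      rw [Finset.sum_subset (Finset.subset_univ r.support) (fun p _ hp => by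
        rw [Finsupp.notMem_support_iff.mp hp, zero_smul])]
      have := Module.Basis.sum_repr basA a
      simp_rw [basA_eq] at this
      exact this
    have term : ∀ p ∈ r.support, Φ m ↑f₀ (co.ρ (e p.1 * z ^ (p.2 : ℕ))) =
        (if p = (f₀, ⟨m, hmn⟩) then (s ↑f₀ ^ m) • e f₀ else 0) := by
      intro p hp
      obtain ⟨c, hc0, hcE⟩ := expandE p.1 (p.2 : ℕ)
      rw [hcE, map_sum]
      have hterm : ∀ j ∈ Finset.range ((p.2 : ℕ) + 1),
          Φ m ↑f₀ ((c j * s ↑p.1 ^ ((p.2 : ℕ) - j)) •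
            ((Xh ^ ((p.2 : ℕ) - j) * P.fG (↑p.1 + j • g₀)) ⊗ₜ[k] (e p.1 * z ^ j))) =
          (if p = (f₀, ⟨m, hmn⟩) ∧ j = 0 then (s ↑f₀ ^ m) • e f₀ else 0) := by
        intro j hj
        have hjp : j ≤ (p.2 : ℕ) := by
          have := Finset.mem_range.mp hj; omega
        have hpm : (p.2 : ℕ) ≤ m := hsupp p hp
        rw [map_smul, Φ_tmul,
          coordVal m ((p.2 : ℕ) - j) ↑f₀ (↑p.1 + j • g₀) hmn (by omega)]
        by_cases hcond : m = (p.2 : ℕ) - j ∧ (↑f₀ : GGrp n) = ↑p.1 + j • g₀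
        · have hj0 : j = 0 := by omega
          have hp2 : (p.2 : ℕ) = m := by omega
          have hp1 : p.1 = f₀ := Subtype.ext (by
            have := hcond.2
            rw [hj0, zero_nsmul, add_zero] at this
            exact this.symm)
          have hpeq : p = (f₀, ⟨m, hmn⟩) := by
            rw [← hp1]
            exact Prod.ext rfl (Fin.ext hp2)
          rw [if_pos hcond, if_pos ⟨hpeq, hj0⟩, hj0, hc0, one_mul, one_smul]
          simp [hp1, hp2]
        · have hneg : ¬(p = (f₀, ⟨m, hmn⟩) ∧ j = 0) := by
            rintro ⟨rfl, rfl⟩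
            exact hcond ⟨by simp, by simp [zero_nsmul]⟩
          rw [if_neg hcond, if_neg hneg, zero_smul, smul_zero]
      rw [Finset.sum_congr rfl hterm]
      by_cases hP : p = (f₀, ⟨m, hmn⟩)
      · simp [hP]
      · simp [hP]
    calc Φ m ↑f₀ (co.ρ a)
        = ∑ p ∈ r.support, r p • Φ m ↑f₀ (co.ρ (e p.1 * z ^ (p.2 : ℕ))) := by
          rw [← ha, map_sum, map_sum]
          exact Finset.sum_congr rfl fun p _ => by rw [map_smul, map_smul]
      _ = ∑ p ∈ r.support,
            (if p = (f₀, ⟨m, hmn⟩) then r p • (s ↑f₀ ^ m) • e f₀ else 0) := by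
          refine Finset.sum_congr rfl fun p hp => ?_
          rw [term p hp]
          split
          · rfl
          · rw [smul_zero]
      _ = (s ↑f₀ ^ m * r (f₀, ⟨m, hmn⟩)) • e f₀ := by
          rw [Finset.sum_ite_eq' r.support (f₀, (⟨m, hmn⟩ : Fin n))
            (fun p => r p • (s ↑f₀ ^ m) • e f₀)]
          split
          · rw [smul_smul, mul_comm]
          · rename_i hns
            rw [Finsupp.notMem_support_iff.mp hns, mul_zero, zero_smul]
  -- nonvanishing of the e f
  have heNe : ∀ f : F, e f ≠ 0 := by
    intro f
    have h0 : ((⟨0, hn0⟩ : Fin n) : ℕ) = 0 := rfl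
    have := basA.ne_zero (f, (⟨0, hn0⟩ : Fin n))
    rwa [basA_eq, h0, pow_zero, mul_one] at this
  -- coordinate of 1
  have coordOne : ∀ (m' : ℕ) (h : GGrp n), m' < n →
      P.bas.coord (idx m' h) (1 : H) = if m' = 0 ∧ h = 0 then 1 else 0 := by
    intro m' h hm'
    have hone : (1 : H) = Xh ^ 0 * P.fG 0 := by rw [pow_zero, P.fG_zero, one_mul]
    rw [hone, coordVal m' 0 h 0 hm' hn0]
  constructor
  · -- right H-simplicity
    intro I hI hcost
    by_cases hbot : I = ⊥
    · exact Or.inl hbot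
    right
    obtain ⟨a, haI, ha0⟩ := Submodule.ne_bot_iff I |>.mp hbot
    have hra : basA.repr a ≠ 0 := fun h => ha0 (by
      simpa using congrArg basA.repr.symm h)
    set S := (basA.repr a).support with hS
    have hSne : S.Nonempty := Finsupp.support_nonempty_iff.mpr hra
    set m := S.sup (fun p => (p.2 : ℕ)) with hm
    have hmn : m < n := by
      rw [hm, Finset.sup_lt_iff (by simp only [Nat.bot_eq_zero]; omega : (⊥ : ℕ) < n)]
      exact fun p _ => p.2.isLt
    obtain ⟨p₀, hp₀S, hp₀⟩ := Finset.exists_mem_eq_sup S hSne (fun p => (p.2 : ℕ))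
    have hsupp : ∀ p ∈ S, (p.2 : ℕ) ≤ m := fun p hp => Finset.le_sup (f := fun p : F × Fin n => (p.2 : ℕ)) hp
    have hext := extract a m hmn hsupp p₀.1
    have hp₀eq : (p₀.1, (⟨m, hmn⟩ : Fin n)) = p₀ := Prod.ext rfl (Fin.ext (hm.trans hp₀))
    rw [hp₀eq] at hext
    have hrp₀ : basA.repr a p₀ ≠ 0 := Finsupp.mem_support_iff.mp hp₀S
    have hIe : e p₀.1 ∈ I := by
      have h1 : Φ m ↑p₀.1 (co.ρ a) ∈ I := costTrans I m ↑p₀.1 _ (hcost a haI)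
      rw [hext] at h1
      have hne : s ↑p₀.1 ^ m * basA.repr a p₀ ≠ 0 :=
        mul_ne_zero (pow_ne_zero _ (hs _)) hrp₀
      have h2 := I.smul_mem (s ↑p₀.1 ^ m * basA.repr a p₀)⁻¹ h1
      rwa [smul_smul, inv_mul_cancel₀ hne, one_smul] at h2
    have h1I : (1 : A) ∈ I := by
      have h2 := hI _ hIe (e (-p₀.1))
      rw [e_mul, add_neg_cancel, e_zero] at h2
      have h3 := I.smul_mem (((ψ.c ↑p₀.1 ↑(-p₀.1) : kˣ) : k))⁻¹ h2
      rwa [smul_smul, inv_mul_cancel₀ (Units.ne_zero _), one_smul] at h3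
    rw [Submodule.eq_top_iff']
    intro b
    simpa using hI 1 h1I b
  · -- trivial coinvariants
    intro a hco
    by_cases ha0 : a = 0
    · exact ⟨0, by simp [ha0]⟩
    have hra : basA.repr a ≠ 0 := fun h => ha0 (by
      simpa using congrArg basA.repr.symm h)
    set S := (basA.repr a).support with hS
    have hSne : S.Nonempty := Finsupp.support_nonempty_iff.mpr hra
    set m := S.sup (fun p => (p.2 : ℕ)) with hm
    have hmn : m < n := by
      rw [hm, Finset.sup_lt_iff (by simp only [Nat.bot_eq_zero]; omega : (⊥ : ℕ) < n)]
      exact fun p _ => p.2.isLt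
    obtain ⟨p₀, hp₀S, hp₀⟩ := Finset.exists_mem_eq_sup S hSne (fun p => (p.2 : ℕ))
    have hsupp : ∀ p ∈ S, (p.2 : ℕ) ≤ m := fun p hp => Finset.le_sup (f := fun p : F × Fin n => (p.2 : ℕ)) hp
    have hrp₀ : basA.repr a p₀ ≠ 0 := Finsupp.mem_support_iff.mp hp₀S
    have hm0 : m = 0 := by
      by_contra hm0
      have hext := extract a m hmn hsupp p₀.1
      have hp₀eq : (p₀.1, (⟨m, hmn⟩ : Fin n)) = p₀ := Prod.ext rfl (Fin.ext (hm.trans hp₀))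
      rw [hp₀eq, hco, Φ_tmul, coordOne m ↑p₀.1 hmn,
        if_neg (fun hc => hm0 hc.1), zero_smul] at hext
      exact heNe p₀.1 (by
        have hne : s ↑p₀.1 ^ m * basA.repr a p₀ ≠ 0 :=
          mul_ne_zero (pow_ne_zero _ (hs _)) hrp₀
        have := hext.symm
        rcases smul_eq_zero.mp this with h | h
        · exact absurd h hne
        · exact h)
    refine ⟨basA.repr a ((0 : F), (⟨m, hmn⟩ : Fin n)), ?_⟩
    have hext := extract a m hmn hsupp 0
    rw [hco, Φ_tmul] at hext
    have hcoe0 : ((0 : F) : GGrp n) = 0 := rfl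
    rw [hcoe0, coordOne m 0 hmn, if_pos ⟨hm0, rfl⟩, one_smul] at hext
    have hpow : s (0 : GGrp n) ^ m = 1 := by rw [hm0, pow_zero]
    rw [e_zero, hpow, one_mul] at hext
    exact hext

end Generic
/-- For any `a, b ∈ k`, any subgroup `F ⊆ G` and any 2-cocycle
`ψ ∈ Z²(F,k^×)`, the algebras `K₀₁(a,F,ψ)` and `K₁₀(b,F,ψ)` are right `H`-simple left
`H`-comodule algebras with trivial coinvariants. -/
theorem K01Pres_K10Pres_rightHSimple_trivialCoinv
    {k : Type*} [Field k] [IsAlgClosed k] [CharZero k]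
    {n : ℕ} (hn : 2 ≤ n) {q : k} (hq : IsPrimitiveRoot q n)
    {H : Type*} [Ring H] [HopfAlgebra k H] (P : HPres k n q 1 1 H)
    (a b : k) (F : AddSubgroup (GGrp n)) (ψ : Cocycle2 (GGrp n) k)
    {A : Type*} [Ring A] [Algebra k A] (co : LeftComodAlg k H A)
    {A' : Type*} [Ring A'] [Algebra k A'] (co' : LeftComodAlg k H A') :
    (K01Pres k n q H P a F ψ co → co.RightHSimple ∧ co.TrivialCoinv) ∧
    (K10Pres k n q H P b F ψ co' → co'.RightHSimple ∧ co'.TrivialCoinv) := by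
  haveI : NeZero n := ⟨by omega⟩
  have hq0 : q ≠ 0 := hq.ne_zero (by omega)
  constructor
  · intro pres
    refine generic_main hn P co F ψ pres.z pres.e ((1 : ZMod n), (0 : ZMod n)) P.x
      (fun f => q ^ f.1.val) (fun f => pow_ne_zero _ hq0)
      (by simp)
      (fun m f => ((⟨m % n, Nat.mod_lt _ (by omega)⟩ : Fin n), 0, f))
      ?_ ?_ pres.e_zero pres.e_mul ?_ pres.co_e pres.co_z pres.li pres.span
    · intro m m' h h' hm hm' heq
      have h1 : m % n = m' % n := congrArg (fun p : Fin n × Fin n × GGrp n => (p.1 : ℕ)) heq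
      have h2 : h = h' := congrArg (fun p : Fin n × Fin n × GGrp n => p.2.2) heq
      rw [Nat.mod_eq_of_lt hm, Nat.mod_eq_of_lt hm'] at h1
      exact ⟨h1, h2⟩
    · intro m h hm
      rw [P.bas_eq]
      simp [Nat.mod_eq_of_lt hm]
    · intro f
      simpa using P.fx f
  · intro pres
    refine generic_main hn P co' F ψ pres.u pres.e ((0 : ZMod n), (-1 : ZMod n)) P.y
      (fun f => q ^ f.2.val) (fun f => pow_ne_zero _ hq0)
      (by simp)
      (fun m f => ((0 : Fin n), (⟨m % n, Nat.mod_lt _ (by omega)⟩ : Fin n), f))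
      ?_ ?_ pres.e_zero pres.e_mul ?_ pres.co_e pres.co_u pres.li pres.span
    · intro m m' h h' hm hm' heq
      have h1 : m % n = m' % n := congrArg (fun p : Fin n × Fin n × GGrp n => (p.2.1 : ℕ)) heq
      have h2 : h = h' := congrArg (fun p : Fin n × Fin n × GGrp n => p.2.2) heq
      rw [Nat.mod_eq_of_lt hm, Nat.mod_eq_of_lt hm'] at h1
      exact ⟨h1, h2⟩
    · intro m h hm
      rw [P.bas_eq]
      simp [Nat.mod_eq_of_lt hm]
    · intro f
      simpa using P.fy f
end
end
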